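/- arXiv:2310.13969 — 7 statements merged into one kernel-verified Lean document; each statement's English description precedes it below -/
import Mathlib

section
/- Fix integers d ≥ 1 and K ≥ 1, reals ρ > 0, λ ≥ 0, μ ∈ ℝ, vectors C = (c_1,…,c_d) ∈ ℝ^d, ω ∈ ℝ^d with nonnegative entries, γ_k ∈ ℝ^d and ζ_k ∈ ℝ^d for k = 1,…,K, and define F : ℝ^d → ℝ by F(ζ) = λ Σ_{j=1}^d ω_j|ζ_j| + Σ_{k=1}^K ⟨γ_k, ζ_k − ζ⟩ + (ρ/2) Σ_{k=1}^K ‖ζ_k − ζ‖² + μ Σ_{j=1}^d c_j ζ_j + (ρ/2)(Σ_{j=1}^d c_j ζ_j)². Then for every coordinate index j and every ζ ∈ ℝ^d, the function t ↦ F(ζ with its j-th coordinate replaced by t) attains its global minimum at the unique point t̂ = Shrink{ (1/ρ) Σ_{k=1}^K γ_{k,j} + Σ_{k=1}^K ζ_{k,j} − (1/ρ)μ c_j − c_j Σ_{m≠j} c_m ζ_m , λω_j/ρ } / (c_j² + K), where Shrink(u, ϑ) = sgn(u)·max(|u| − ϑ, 0). -/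
open Finset Filter
open scoped RealInnerProductSpace

noncomputable section

/-- The soft-thresholding operator `Shrink(u, ϑ) = sgn(u)·max(|u| − ϑ, 0)`. -/
def shrink (u ϑ : ℝ) : ℝ := Real.sign u * max (|u| - ϑ) 0

lemma shrink_mul_pos (c u ϑ : ℝ) (hc : 0 < c) :
    shrink (c * u) (c * ϑ) = c * shrink u ϑ := by
  unfold shrink
  have hsign : Real.sign (c * u) = Real.sign u := by
    rcases lt_trichotomy u 0 with h | h | h
    · rw [Real.sign_of_neg h, Real.sign_of_neg (by nlinarith)]
    · simp [h]
    · rw [Real.sign_of_pos h, Real.sign_of_pos (by positivity)]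
  have hm : c * (|u| - ϑ) ⊔ 0 = c * ((|u| - ϑ) ⊔ 0) := by
    rw [mul_max_of_nonneg _ _ hc.le, mul_zero]
  rw [hsign, abs_mul, abs_of_pos hc, ← mul_sub, hm]
  ring

lemma quad_shrink_lt (a b θ : ℝ) (ha : 0 < a) (hθ : 0 ≤ θ)
    (t : ℝ) (hne : t ≠ shrink (-b) θ / a) :
    a/2 * (shrink (-b) θ / a)^2 + b * (shrink (-b) θ / a) + θ * |shrink (-b) θ / a|
      < a/2 * t^2 + b * t + θ * |t| := by
  rcases le_or_gt (|(-b)|) θ with h | h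
  · have h0 : shrink (-b) θ = 0 := by
      unfold shrink
      have h0 : max (|(-b)| - θ) 0 = 0 := max_eq_right (by linarith)
      rw [h0, mul_zero]
    rw [h0] at hne ⊢
    simp only [zero_div, abs_zero] at hne ⊢
    have h1 : -(|b| * |t|) ≤ b * t := by rw [← abs_mul]; exact neg_abs_le _
    have h2 : |b| * |t| ≤ θ * |t| := by
      apply mul_le_mul_of_nonneg_right _ (abs_nonneg t)
      rwa [abs_neg] at h
    have h3 : 0 < t^2 := by positivity
    nlinarith
  · rw [abs_neg] at h
    rcases lt_trichotomy b 0 with hb | hb | hb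
    · have hs : shrink (-b) θ = -b - θ := by
        unfold shrink
        rw [Real.sign_of_pos (by linarith), abs_neg, abs_of_neg hb,
          max_eq_left (by rw [abs_of_neg hb] at h; linarith)]
        ring
      set ts := shrink (-b) θ / a with hts
      have hab : a * ts = -b - θ := by rw [hts, hs]; field_simp
      have htspos : 0 < ts := by
        have h6 : 0 < a * ts := by rw [hab]; rw [abs_of_neg hb] at h; linarith
        nlinarith
      have habs : |ts| = ts := abs_of_pos htspos
      rw [habs]
      have h4 : t ≤ |t| := le_abs_self t
      have h5 : 0 < (t - ts)^2 := by
        have : t - ts ≠ 0 := sub_ne_zero.mpr hne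
        positivity
      nlinarith [mul_nonneg hθ (by linarith : (0:ℝ) ≤ |t| - t), mul_pos ha h5]
    · exfalso; rw [hb] at h; simp at h; linarith
    · have hs : shrink (-b) θ = -b + θ := by
        unfold shrink
        rw [Real.sign_of_neg (by linarith), abs_neg, abs_of_pos hb,
          max_eq_left (by rw [abs_of_pos hb] at h; linarith)]
        ring
      set ts := shrink (-b) θ / a with hts
      have hab : a * ts = -b + θ := by rw [hts, hs]; field_simp
      have htsneg : ts < 0 := by
        have h6 : a * ts < 0 := by rw [hab]; rw [abs_of_pos hb] at h; linarith
        nlinarith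
      have habs : |ts| = -ts := abs_of_neg htsneg
      rw [habs]
      have h4 : -|t| ≤ t := neg_abs_le t
      have h5 : 0 < (t - ts)^2 := by
        have : t - ts ≠ 0 := sub_ne_zero.mpr hne
        positivity
      nlinarith [mul_nonneg hθ (by linarith : (0:ℝ) ≤ |t| + t), mul_pos ha h5]

lemma sum_update_eq {d : ℕ} (ζ : Fin d → ℝ) (j : Fin d) (t : ℝ) (h : Fin d → ℝ → ℝ) :
    ∑ m, h m (Function.update ζ j t m)
      = h j t + ∑ m ∈ Finset.univ.erase j, h m (ζ m) := by
  rw [← Finset.add_sum_erase _ (fun m => h m (Function.update ζ j t m)) (Finset.mem_univ j),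
    Function.update_self]
  congr 1
  exact Finset.sum_congr rfl fun m hm => by
    rw [Function.update_of_ne (Finset.ne_of_mem_erase hm)]

/-- the coordinate-descent update (scd1) of the DSCDMM algorithm.
For each coordinate `j`, the one-variable function `t ↦ F(ζ with j-th coordinate
replaced by t)` attains its global minimum at the unique point given by the
soft-thresholding formula. -/
theorem dscdmm_coordinate_update
    (d K : ℕ) (hd : 1 ≤ d) (hK : 1 ≤ K)
    (ρ lam μ : ℝ) (hρ : 0 < ρ) (hlam : 0 ≤ lam)
    (C ω : EuclideanSpace ℝ (Fin d)) (hω : ∀ j, 0 ≤ ω j)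
    (γ ζv : Fin K → EuclideanSpace ℝ (Fin d))
    (F : EuclideanSpace ℝ (Fin d) → ℝ)
    (hF : ∀ x : EuclideanSpace ℝ (Fin d),
      F x = lam * ∑ j, ω j * |x j|
        + (∑ k, ⟪γ k, ζv k - x⟫) + (ρ / 2) * ∑ k, ‖ζv k - x‖ ^ 2
        + μ * ∑ j, C j * x j + (ρ / 2) * (∑ j, C j * x j) ^ 2)
    (j : Fin d) (ζ : EuclideanSpace ℝ (Fin d))
    (that : ℝ)
    (hthat : that =
      shrink ((1 / ρ) * ∑ k, γ k j + ∑ k, ζv k j - (1 / ρ) * μ * C j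
          - C j * ∑ m ∈ Finset.univ.erase j, C m * ζ m)
        (lam * ω j / ρ) / ((C j) ^ 2 + K)) :
    (∀ t, F (WithLp.toLp 2 (Function.update ζ j that)) ≤ F (WithLp.toLp 2 (Function.update ζ j t))) ∧
    (∀ t, F (WithLp.toLp 2 (Function.update ζ j t)) = F (WithLp.toLp 2 (Function.update ζ j that)) → t = that) := by
  set s := ∑ m ∈ Finset.univ.erase j, C m * ζ m with hs
  set a := ρ * ((C j)^2 + K) with ha_def
  set b := -(∑ k, γ k j) - ρ * (∑ k, ζv k j) + μ * C j + ρ * C j * s with hb_def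
  set θ := lam * ω j with hθ_def
  have haK : (0:ℝ) < (C j)^2 + K := by
    have h1 : (1:ℝ) ≤ (K:ℝ) := by exact_mod_cast hK
    nlinarith [sq_nonneg (C j)]
  have ha : 0 < a := mul_pos hρ haK
  have hθ : 0 ≤ θ := mul_nonneg hlam (hω j)
  -- the minimizer in normalized form
  have hthat' : that = shrink (-b) θ / a := by
    have hb : -b = ρ * ((1 / ρ) * ∑ k, γ k j + ∑ k, ζv k j - (1 / ρ) * μ * C j - C j * s) := by
      rw [hb_def]; field_simp; ring
    have hθ' : θ = ρ * (lam * ω j / ρ) := by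
      rw [hθ_def]; field_simp
    rw [hthat, hb, hθ', shrink_mul_pos _ _ _ hρ, ha_def,
      mul_div_mul_left _ _ (ne_of_gt hρ), mul_div_cancel_left₀ _ (ne_of_gt hρ)]
  -- the key one-dimensional reduction
  have key : ∀ t : ℝ, F (WithLp.toLp 2 (Function.update ζ j t)) =
      a/2 * t^2 + b * t + θ * |t|
      + (lam * ∑ m ∈ Finset.univ.erase j, ω m * |ζ m|
        + (∑ k, (γ k j * ζv k j + ∑ m ∈ Finset.univ.erase j, γ k m * (ζv k m - ζ m)))
        + (ρ/2) * (∑ k, ((ζv k j)^2 + ∑ m ∈ Finset.univ.erase j, (ζv k m - ζ m)^2))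
        + μ * s + (ρ/2) * s^2) := by
    intro t
    rw [hF]
    simp only [PiLp.toLp_apply]
    have e1 : ∑ m, ω m * |Function.update ζ j t m|
        = ω j * |t| + ∑ m ∈ Finset.univ.erase j, ω m * |ζ m| :=
      sum_update_eq ζ j t (fun m u => ω m * |u|)
    have e2 : ∀ k, ⟪γ k, ζv k - WithLp.toLp 2 (Function.update ζ j t)⟫
        = γ k j * (ζv k j - t)
          + ∑ m ∈ Finset.univ.erase j, γ k m * (ζv k m - ζ m) := by
      intro k
      rw [PiLp.inner_apply]
      simp only [RCLike.inner_apply', conj_trivial, PiLp.sub_apply, PiLp.toLp_apply]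
      exact sum_update_eq ζ j t (fun m u => γ k m * (ζv k m - u))
    have e3 : ∀ k, ‖ζv k - WithLp.toLp 2 (Function.update ζ j t)‖^2
        = (ζv k j - t)^2 + ∑ m ∈ Finset.univ.erase j, (ζv k m - ζ m)^2 := by
      intro k
      rw [← real_inner_self_eq_norm_sq, PiLp.inner_apply]
      simp only [RCLike.inner_apply, conj_trivial, PiLp.sub_apply, PiLp.toLp_apply, pow_two]
      exact sum_update_eq ζ j t (fun m u => (ζv k m - u) * (ζv k m - u))
    have e4 : ∑ m, C m * Function.update ζ j t m = C j * t + s :=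
      sum_update_eq ζ j t (fun m u => C m * u)
    rw [e1, e4]
    simp only [e2, e3]
    rw [ha_def, hb_def, hθ_def]
    simp only [sub_sq, mul_sub, sub_mul, Finset.sum_add_distrib,
      Finset.sum_sub_distrib, ← Finset.sum_mul, ← Finset.mul_sum,
      Finset.sum_const, Finset.card_univ, Fintype.card_fin, nsmul_eq_mul]
    ring
  constructor
  · intro t
    by_cases h : t = that
    · rw [h]
    · have hne : t ≠ shrink (-b) θ / a := by rw [← hthat']; exact h
      have hlt := quad_shrink_lt a b θ ha hθ t hne
      rw [key t, key that, hthat']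
      linarith
  · intro t heq
    by_contra h
    have hne : t ≠ shrink (-b) θ / a := by rw [← hthat']; exact h
    have hlt := quad_shrink_lt a b θ ha hθ t hne
    rw [key t, key that, hthat'] at heq
    linarith
end
end

section
/- (Lemma 1, upper bound.) Under the stated hypotheses, the optimality gap satisfies Σ_{k=1}^K ( Q_k(ζ_k^{l+1}) − Q_k(ζ★) ) ≤ − Σ_{k=1}^K μ_k^{l+1} g_k^{l+1} − Σ_{k=1}^{K−1} ⟨γ_k^{l+1}, r_k^{l+1}⟩ + Σ_{k∈N_h} ⟨s_k^{l+1}, ζ★ − ζ_k^{l+1}⟩. -/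
open Finset Filter
open scoped RealInnerProductSpace

noncomputable section

lemma tele_inner {E : Type*} [NormedAddCommGroup E] [InnerProductSpace ℝ E]
    (K : ℕ) (hK : 2 ≤ K) (g w : ℕ → E) (h0 : g 0 = 0) (hKz : g K = 0) :
    ∑ k ∈ Finset.Icc 1 K, (⟪g k, w k⟫ - ⟪g (k-1), w k⟫)
      = ∑ k ∈ Finset.Icc 1 (K-1), ⟪g k, w k - w (k+1)⟫ := by
  obtain ⟨m, rfl⟩ : ∃ m, K = m + 1 := ⟨K-1, by omega⟩
  simp only [Nat.add_sub_cancel]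
  rw [← Finset.Ico_add_one_right_eq_Icc, ← Finset.Ico_add_one_right_eq_Icc, Finset.sum_Ico_eq_sum_range,
    Finset.sum_Ico_eq_sum_range]
  simp only [Nat.add_sub_cancel, show m + 1 + 1 - 1 = m + 1 by omega]
  have A : ∑ i ∈ Finset.range (m+1), (⟪g (1+i), w (1+i)⟫ - ⟪g (1+i-1), w (1+i)⟫)
      = ∑ i ∈ Finset.range (m+1), ⟪g (1+i), w (1+i)⟫
        - ∑ i ∈ Finset.range (m+1), ⟪g i, w (1+i)⟫ := by
    rw [← Finset.sum_sub_distrib]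
    exact Finset.sum_congr rfl fun i _ => by norm_num
  rw [A, Finset.sum_range_succ, Finset.sum_range_succ',
    show 1 + m = m + 1 by omega, hKz, h0]
  simp only [inner_zero_left, add_zero, zero_add, ← Finset.sum_sub_distrib]
  exact Finset.sum_congr rfl fun i _ => by
    rw [inner_sub_right, show 1 + i = i + 1 by omega, show 1 + (i + 1) = i + 1 + 1 by omega]

/-- Lemma 1, upper bound: the optimality-gap upper bound of the
DSGCDMM iterates, where head machines (odd `k`) minimize the linearized
objective with the dual-residual term `s_k` and tail machines (even `k`)
minimize it without `s_k`. -/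
theorem lemma1_upper_bound
    (d K : ℕ) (hd : 1 ≤ d) (hK : 2 ≤ K) (hKeven : Even K)
    (n : ℕ → ℕ) (hn : ∀ k ∈ Icc 1 K, 1 ≤ n k)
    (y : ∀ k, EuclideanSpace ℝ (Fin (n k)))
    (P : ∀ k, Matrix (Fin (n k)) (Fin d) ℝ)
    (lam : ℝ) (hlam : 0 ≤ lam)
    (ω : ℕ → Fin d → ℝ) (hω : ∀ k ∈ Icc 1 K, ∀ j, 0 ≤ ω k j)
    (C : EuclideanSpace ℝ (Fin d))
    (Q : ℕ → EuclideanSpace ℝ (Fin d) → ℝ)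
    (hQ : ∀ k, ∀ x : EuclideanSpace ℝ (Fin d), Q k x =
      (1 / (2 * (n k : ℝ))) * ‖y k - (P k).toEuclideanLin x‖ ^ 2
        + lam * ∑ j, ω k j * |x j|)
    (ζs : EuclideanSpace ℝ (Fin d)) (hCζs : ⟪C, ζs⟫ = 0)
    (hmin : ∀ z : EuclideanSpace ℝ (Fin d), ⟪C, z⟫ = 0 →
      ∑ k ∈ Icc 1 K, Q k ζs ≤ ∑ k ∈ Icc 1 K, Q k z)
    (μ1 : ℕ → ℝ) (γ1 : ℕ → EuclideanSpace ℝ (Fin d))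
    (hγ0 : γ1 0 = 0) (hγK : γ1 K = 0)
    (s : ℕ → EuclideanSpace ℝ (Fin d))
    (ζ1 : ℕ → EuclideanSpace ℝ (Fin d))
    (hhead : ∀ k ∈ Icc 1 K, Odd k → ∀ z : EuclideanSpace ℝ (Fin d),
      Q k (ζ1 k) + ⟪μ1 k • C - γ1 (k-1) + γ1 k + s k, ζ1 k⟫
        ≤ Q k z + ⟪μ1 k • C - γ1 (k-1) + γ1 k + s k, z⟫)
    (htail : ∀ k ∈ Icc 1 K, Even k → ∀ z : EuclideanSpace ℝ (Fin d),
      Q k (ζ1 k) + ⟪μ1 k • C - γ1 (k-1) + γ1 k, ζ1 k⟫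
        ≤ Q k z + ⟪μ1 k • C - γ1 (k-1) + γ1 k, z⟫) :
    ∑ k ∈ Icc 1 K, (Q k (ζ1 k) - Q k ζs)
      ≤ - (∑ k ∈ Icc 1 K, μ1 k * ⟪C, ζ1 k⟫)
        - (∑ k ∈ Icc 1 (K-1), ⟪γ1 k, ζ1 k - ζ1 (k+1)⟫)
        + ∑ k ∈ (Icc 1 K).filter (fun k => Odd k), ⟪s k, ζs - ζ1 k⟫ := by
  have key : ∀ k ∈ Icc 1 K, Q k (ζ1 k) - Q k ζs ≤
      μ1 k * (-⟪C, ζ1 k⟫) + (⟪γ1 k, ζs - ζ1 k⟫ - ⟪γ1 (k-1), ζs - ζ1 k⟫)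
        + (if Odd k then ⟪s k, ζs - ζ1 k⟫ else 0) := by
    intro k hk
    rcases Nat.even_or_odd k with he | ho
    · have h := htail k hk he ζs
      rw [if_neg (by simpa using Nat.not_odd_iff_even.mpr he)]
      have e : ⟪μ1 k • C - γ1 (k-1) + γ1 k, ζs - ζ1 k⟫
          = μ1 k * (-⟪C, ζ1 k⟫) + (⟪γ1 k, ζs - ζ1 k⟫ - ⟪γ1 (k-1), ζs - ζ1 k⟫) := by
        simp only [inner_add_left, inner_sub_left, inner_sub_right, real_inner_smul_left, hCζs]
        ring
      rw [inner_sub_right] at e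
      linarith
    · have h := hhead k hk ho ζs
      rw [if_pos ho]
      have e : ⟪μ1 k • C - γ1 (k-1) + γ1 k + s k, ζs - ζ1 k⟫
          = μ1 k * (-⟪C, ζ1 k⟫) + (⟪γ1 k, ζs - ζ1 k⟫ - ⟪γ1 (k-1), ζs - ζ1 k⟫)
            + ⟪s k, ζs - ζ1 k⟫ := by
        simp only [inner_add_left, inner_sub_left, inner_sub_right, real_inner_smul_left, hCζs]
        ring
      rw [inner_sub_right] at e
      linarith
  calc ∑ k ∈ Icc 1 K, (Q k (ζ1 k) - Q k ζs)
      ≤ ∑ k ∈ Icc 1 K, (μ1 k * (-⟪C, ζ1 k⟫)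
          + (⟪γ1 k, ζs - ζ1 k⟫ - ⟪γ1 (k-1), ζs - ζ1 k⟫)
          + (if Odd k then ⟪s k, ζs - ζ1 k⟫ else 0)) := Finset.sum_le_sum key
    _ = - (∑ k ∈ Icc 1 K, μ1 k * ⟪C, ζ1 k⟫)
        - (∑ k ∈ Icc 1 (K-1), ⟪γ1 k, ζ1 k - ζ1 (k+1)⟫)
        + ∑ k ∈ (Icc 1 K).filter (fun k => Odd k), ⟪s k, ζs - ζ1 k⟫ := by
      rw [Finset.sum_add_distrib, Finset.sum_add_distrib,
        tele_inner K hK γ1 (fun k => ζs - ζ1 k) hγ0 hγK, Finset.sum_filter]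
      have h1 : ∑ k ∈ Icc 1 K, μ1 k * (-⟪C, ζ1 k⟫)
          = - ∑ k ∈ Icc 1 K, μ1 k * ⟪C, ζ1 k⟫ := by
        rw [← Finset.sum_neg_distrib]; exact Finset.sum_congr rfl fun k _ => by ring
      have h2 : ∑ k ∈ Icc 1 (K-1), ⟪γ1 k, (ζs - ζ1 k) - (ζs - ζ1 (k+1))⟫
          = - ∑ k ∈ Icc 1 (K-1), ⟪γ1 k, ζ1 k - ζ1 (k+1)⟫ := by
        rw [← Finset.sum_neg_distrib]
        exact Finset.sum_congr rfl fun k _ => by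
          rw [← inner_neg_right]; congr 1; abel
      rw [h1, h2]; ring
end
end

section
/- For every iteration index l and every even machine index k with 2 ≤ k < K, there exists a subgradient v of Q_k at ζ_k^{l+1} such that v + μ_k^{l+1} C − γ_{k−1}^{l+1} + γ_k^{l+1} = 0. In other words, after every DSGCDMM iteration the dual feasibility condition holds exactly at the interior tail machines (the dual residual of tail machines is always zero). -/
open Finset Filter
open scoped RealInnerProductSpace

noncomputable section

def IsSubgrad {d : ℕ} (f : EuclideanSpace ℝ (Fin d) → ℝ)
    (x v : EuclideanSpace ℝ (Fin d)) : Prop :=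
  ∀ z, f x + ⟪v, z - x⟫ ≤ f z

set_option maxHeartbeats 1000000 in
/-- after every DSGCDMM iteration the dual feasibility condition holds exactly at the interior tail machines (even k with 2 ≤ k < K). -/
theorem dsgcdmm_tail_dual_feasibility_interior
    (d K : ℕ) (hd : 1 ≤ d) (hK : 2 ≤ K) (hKeven : Even K)
    (n : ℕ → ℕ) (hn : ∀ k ∈ Icc 1 K, 1 ≤ n k)
    (y : ∀ k, EuclideanSpace ℝ (Fin (n k)))
    (P : ∀ k, Matrix (Fin (n k)) (Fin d) ℝ)
    (lam : ℝ) (hlam : 0 ≤ lam)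
    (ω : ℕ → Fin d → ℝ) (hω : ∀ k ∈ Icc 1 K, ∀ j, 0 ≤ ω k j)
    (C : EuclideanSpace ℝ (Fin d))
    (Q : ℕ → EuclideanSpace ℝ (Fin d) → ℝ)
    (hQ : ∀ k, ∀ x : EuclideanSpace ℝ (Fin d), Q k x =
      (1 / (2 * (n k : ℝ))) * ‖y k - (P k).toEuclideanLin x‖ ^ 2
        + lam * ∑ j, ω k j * |x j|)
    (ρ : ℝ) (hρ : 0 < ρ)
    (ζ : ℕ → ℕ → EuclideanSpace ℝ (Fin d))
    (μ : ℕ → ℕ → ℝ)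
    (γ : ℕ → ℕ → EuclideanSpace ℝ (Fin d))
    (hdyn1 : ∀ l : ℕ, ∀ z : EuclideanSpace ℝ (Fin d),
      Q 1 (ζ (l+1) 1) + μ l 1 * ⟪C, ζ (l+1) 1⟫ + (ρ/2) * ⟪C, ζ (l+1) 1⟫ ^ 2
          + ⟪γ l 1, ζ (l+1) 1 - ζ l 2⟫ + (ρ/2) * ‖ζ (l+1) 1 - ζ l 2‖ ^ 2
        ≤ Q 1 z + μ l 1 * ⟪C, z⟫ + (ρ/2) * ⟪C, z⟫ ^ 2
          + ⟪γ l 1, z - ζ l 2⟫ + (ρ/2) * ‖z - ζ l 2‖ ^ 2)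
    (hdynodd : ∀ l : ℕ, ∀ k, Odd k → 1 < k → k < K → ∀ z : EuclideanSpace ℝ (Fin d),
      Q k (ζ (l+1) k) + μ l k * ⟪C, ζ (l+1) k⟫ + (ρ/2) * ⟪C, ζ (l+1) k⟫ ^ 2
          + ⟪γ l (k-1), ζ l (k-1) - ζ (l+1) k⟫ + ⟪γ l k, ζ (l+1) k - ζ l (k+1)⟫
          + (ρ/2) * ‖ζ l (k-1) - ζ (l+1) k‖ ^ 2 + (ρ/2) * ‖ζ (l+1) k - ζ l (k+1)‖ ^ 2
        ≤ Q k z + μ l k * ⟪C, z⟫ + (ρ/2) * ⟪C, z⟫ ^ 2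
          + ⟪γ l (k-1), ζ l (k-1) - z⟫ + ⟪γ l k, z - ζ l (k+1)⟫
          + (ρ/2) * ‖ζ l (k-1) - z‖ ^ 2 + (ρ/2) * ‖z - ζ l (k+1)‖ ^ 2)
    (hdyneven : ∀ l : ℕ, ∀ k, Even k → 0 < k → k < K → ∀ z : EuclideanSpace ℝ (Fin d),
      Q k (ζ (l+1) k) + μ l k * ⟪C, ζ (l+1) k⟫ + (ρ/2) * ⟪C, ζ (l+1) k⟫ ^ 2
          + ⟪γ l (k-1), ζ (l+1) (k-1) - ζ (l+1) k⟫ + ⟪γ l k, ζ (l+1) k - ζ (l+1) (k+1)⟫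
          + (ρ/2) * ‖ζ (l+1) (k-1) - ζ (l+1) k‖ ^ 2 + (ρ/2) * ‖ζ (l+1) k - ζ (l+1) (k+1)‖ ^ 2
        ≤ Q k z + μ l k * ⟪C, z⟫ + (ρ/2) * ⟪C, z⟫ ^ 2
          + ⟪γ l (k-1), ζ (l+1) (k-1) - z⟫ + ⟪γ l k, z - ζ (l+1) (k+1)⟫
          + (ρ/2) * ‖ζ (l+1) (k-1) - z‖ ^ 2 + (ρ/2) * ‖z - ζ (l+1) (k+1)‖ ^ 2)
    (hdynK : ∀ l : ℕ, ∀ z : EuclideanSpace ℝ (Fin d),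
      Q K (ζ (l+1) K) + μ l K * ⟪C, ζ (l+1) K⟫ + (ρ/2) * ⟪C, ζ (l+1) K⟫ ^ 2
          + ⟪γ l (K-1), ζ (l+1) (K-1) - ζ (l+1) K⟫ + (ρ/2) * ‖ζ (l+1) (K-1) - ζ (l+1) K‖ ^ 2
        ≤ Q K z + μ l K * ⟪C, z⟫ + (ρ/2) * ⟪C, z⟫ ^ 2
          + ⟪γ l (K-1), ζ (l+1) (K-1) - z⟫ + (ρ/2) * ‖ζ (l+1) (K-1) - z‖ ^ 2)
    (hμ : ∀ l : ℕ, ∀ k ∈ Icc 1 K, μ (l+1) k = μ l k + ρ * ⟪C, ζ (l+1) k⟫)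
    (hγ : ∀ l : ℕ, ∀ k ∈ Icc 1 (K-1),
      γ (l+1) k = γ l k + ρ • (ζ (l+1) k - ζ (l+1) (k+1)))
    :
    ∀ l : ℕ, ∀ k, Even k → 2 ≤ k → k < K →
      ∃ v : EuclideanSpace ℝ (Fin d), IsSubgrad (Q k) (ζ (l+1) k) v ∧
        v + μ (l+1) k • C - γ (l+1) (k-1) + γ (l+1) k = 0 := by

  intro l k hke hk2 hkK
  have hkm : k - 1 + 1 = k := by omega
  have hμk := hμ l k (by simp [Finset.mem_Icc]; omega)
  have hγ1 := hγ l (k-1) (by simp [Finset.mem_Icc]; omega)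
  have hγ2 := hγ l k (by simp [Finset.mem_Icc]; omega)
  rw [hkm] at hγ1
  have hωk := hω k (by simp [Finset.mem_Icc]; omega)
  have hmin := hdyneven l k hke (by omega) hkK
  set x := ζ (l+1) k with hx
  set a := ζ (l+1) (k-1) with ha
  set b := ζ (l+1) (k+1) with hb
  refine ⟨γ (l+1) (k-1) - γ (l+1) k - μ (l+1) k • C, ?_, by abel⟩
  intro z
  set h := z - x with hh
  -- convexity of Q k along the segment
  have hconv : ∀ t : ℝ, 0 ≤ t → t ≤ 1 →
      Q k (x + t • h) ≤ Q k x + t * (Q k z - Q k x) := by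
    intro t ht0 ht1
    rw [hQ, hQ, hQ]
    set L := (P k).toEuclideanLin with hL
    set u := y k - L x with hu
    set w := y k - L z with hw
    have hrep : y k - L (x + t • h) = u + t • (w - u) := by
      simp only [hh, map_add, map_smul, map_sub, hu, hw]
      module
    have e1 : ‖u + t • (w - u)‖ ^ 2
        = ‖u‖ ^ 2 + 2 * (t * ⟪u, w - u⟫) + t ^ 2 * ‖w - u‖ ^ 2 := by
      rw [norm_add_sq_real, real_inner_smul_right, norm_smul]
      simp [mul_pow, sq_abs]
    have e2 : ‖w - u‖ ^ 2 = ‖w‖ ^ 2 - 2 * ⟪w, u⟫ + ‖u‖ ^ 2 := norm_sub_sq_real w u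
    have e3 : ⟪u, w - u⟫ = ⟪w, u⟫ - ‖u‖ ^ 2 := by
      rw [inner_sub_right, real_inner_self_eq_norm_sq, real_inner_comm]
    have hn2 : ‖u + t • (w - u)‖ ^ 2 ≤ ‖u‖ ^ 2 + t * (‖w‖ ^ 2 - ‖u‖ ^ 2) := by
      rw [e1, e3]
      nlinarith [sq_nonneg ‖w - u‖, mul_nonneg (mul_nonneg ht0 (sub_nonneg.2 ht1)) (sq_nonneg ‖w - u‖)]
    have hc : (0:ℝ) ≤ 1 / (2 * (n k : ℝ)) := by positivity
    have habs : ∑ j, ω k j * |(x + t • h) j|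
        ≤ (∑ j, ω k j * |x j|) + t * ((∑ j, ω k j * |z j|) - ∑ j, ω k j * |x j|) := by
      have hpt : ∀ j ∈ Finset.univ, ω k j * |(x + t • h) j|
          ≤ (1-t) * (ω k j * |x j|) + t * (ω k j * |z j|) := by
        intro j _
        have hj : (x + t • h) j = (1 - t) * x j + t * z j := by
          simp [hh, PiLp.add_apply, PiLp.smul_apply, PiLp.sub_apply, smul_eq_mul]
          ring
        rw [hj]
        have h1 : |(1-t) * x j + t * z j| ≤ (1-t) * |x j| + t * |z j| := by
          calc |(1-t) * x j + t * z j| ≤ |(1-t) * x j| + |t * z j| := abs_add_le _ _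
            _ = (1-t) * |x j| + t * |z j| := by
                rw [abs_mul, abs_mul, abs_of_nonneg ht0, abs_of_nonneg (by linarith)]
        calc ω k j * |(1-t) * x j + t * z j| ≤ ω k j * ((1-t) * |x j| + t * |z j|) :=
              mul_le_mul_of_nonneg_left h1 (hωk j)
          _ = (1-t) * (ω k j * |x j|) + t * (ω k j * |z j|) := by ring
      calc ∑ j, ω k j * |(x + t • h) j|
          ≤ ∑ j, ((1-t) * (ω k j * |x j|) + t * (ω k j * |z j|)) := Finset.sum_le_sum hpt
        _ = (∑ j, ω k j * |x j|) + t * ((∑ j, ω k j * |z j|) - ∑ j, ω k j * |x j|) := by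
            rw [Finset.sum_add_distrib, ← Finset.mul_sum, ← Finset.mul_sum]; ring
    rw [hrep]
    have H1 := mul_le_mul_of_nonneg_left hn2 hc
    have H2 := mul_le_mul_of_nonneg_left habs hlam
    ring_nf at H1 H2 ⊢
    linarith [H1, H2]
  -- key inequality for each t in (0,1]
  have key : ∀ t : ℝ, 0 < t → t ≤ 1 →
      0 ≤ (Q k z - Q k x + ((μ l k + ρ * ⟪C, x⟫) * ⟪C, h⟫ - ⟪γ l (k-1), h⟫
            - ρ * ⟪a - x, h⟫ + ⟪γ l k, h⟫ + ρ * ⟪x - b, h⟫))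
          + t * ((ρ/2) * ⟪C, h⟫ ^ 2 + ρ * ‖h‖ ^ 2) := by
    intro t ht0 ht1
    have hmt := hmin (x + t • h)
    have c1 : ⟪C, x + t • h⟫ = ⟪C, x⟫ + t * ⟪C, h⟫ := by
      rw [inner_add_right, real_inner_smul_right]
    have ea : a - (x + t • h) = (a - x) - t • h := by abel
    have eb : (x + t • h) - b = (x - b) + t • h := by abel
    have c2 : ⟪γ l (k-1), a - (x + t • h)⟫ = ⟪γ l (k-1), a - x⟫ - t * ⟪γ l (k-1), h⟫ := by
      rw [ea, inner_sub_right, real_inner_smul_right]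
    have c3 : ⟪γ l k, (x + t • h) - b⟫ = ⟪γ l k, x - b⟫ + t * ⟪γ l k, h⟫ := by
      rw [eb, inner_add_right, real_inner_smul_right]
    have c4 : ‖a - (x + t • h)‖ ^ 2
        = ‖a - x‖ ^ 2 - 2 * (t * ⟪a - x, h⟫) + t ^ 2 * ‖h‖ ^ 2 := by
      rw [ea, norm_sub_sq_real, real_inner_smul_right, norm_smul]
      simp [mul_pow, sq_abs]
    have c5 : ‖(x + t • h) - b‖ ^ 2
        = ‖x - b‖ ^ 2 + 2 * (t * ⟪x - b, h⟫) + t ^ 2 * ‖h‖ ^ 2 := by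
      rw [eb, norm_add_sq_real, real_inner_smul_right, norm_smul]
      simp [mul_pow, sq_abs]
    rw [c1, c2, c3, c4, c5] at hmt
    have hcv := hconv t (le_of_lt ht0) ht1
    have hmul : 0 ≤ t * ((Q k z - Q k x + ((μ l k + ρ * ⟪C, x⟫) * ⟪C, h⟫ - ⟪γ l (k-1), h⟫
            - ρ * ⟪a - x, h⟫ + ⟪γ l k, h⟫ + ρ * ⟪x - b, h⟫))
          + t * ((ρ/2) * ⟪C, h⟫ ^ 2 + ρ * ‖h‖ ^ 2)) := by nlinarith [hmt, hcv]
    exact nonneg_of_mul_nonneg_right hmul ht0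
  -- pass to the limit t → 0
  have hR : (0:ℝ) ≤ (ρ/2) * ⟪C, h⟫ ^ 2 + ρ * ‖h‖ ^ 2 := by positivity
  set A := Q k z - Q k x + ((μ l k + ρ * ⟪C, x⟫) * ⟪C, h⟫ - ⟪γ l (k-1), h⟫
      - ρ * ⟪a - x, h⟫ + ⟪γ l k, h⟫ + ρ * ⟪x - b, h⟫) with hA
  set R := (ρ/2) * ⟪C, h⟫ ^ 2 + ρ * ‖h‖ ^ 2 with hRdef
  have hA0 : 0 ≤ A := by
    by_contra hcon
    push_neg at hcon
    set s := (-A) / (2 * (R + 1)) with hs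
    have hs0 : 0 < s := by
      apply div_pos (by linarith) (by linarith)
    have hseq : s * (2 * (R + 1)) = -A := div_mul_cancel₀ _ (by linarith)
    have ht0 : 0 < min 1 s := lt_min one_pos hs0
    have ht1 : min 1 s ≤ 1 := min_le_left _ _
    have hk2' := key (min 1 s) ht0 ht1
    have hts : min 1 s ≤ s := min_le_right _ _
    have h5 : min 1 s * R ≤ s * R := mul_le_mul_of_nonneg_right hts hR
    nlinarith [h5, hk2', hseq, hs0, hR]
  have hv : ⟪γ (l+1) (k-1) - γ (l+1) k - μ (l+1) k • C, z - x⟫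
      = -((μ l k + ρ * ⟪C, x⟫) * ⟪C, h⟫ - ⟪γ l (k-1), h⟫
            - ρ * ⟪a - x, h⟫ + ⟪γ l k, h⟫ + ρ * ⟪x - b, h⟫) := by
    rw [hγ1, hγ2, hμk, ← hh]
    simp only [inner_sub_left, inner_add_left, real_inner_smul_left]
    ring
  have : Q k x + ⟪γ (l+1) (k-1) - γ (l+1) k - μ (l+1) k • C, z - x⟫ ≤ Q k z := by
    rw [hv]; linarith
  exact this
end
end

section
/- For every iteration index l, there exists a subgradient v of Q_1 at ζ_1^{l+1} such that v + μ_1^{l+1} C + γ_1^{l+1} + s_1^{l+1} = 0, where s_1^{l+1} = ρ(ζ_2^{l+1} − ζ_2^l) is the dual residual of the first head machine. In other words, the first head machine satisfies the dual feasibility condition up to the dual residual s_1^{l+1}. -/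
open Finset Filter
open scoped RealInnerProductSpace

noncomputable section

lemma sq_norm_combo {E : Type*} [NormedAddCommGroup E] [InnerProductSpace ℝ E]
    (a b : E) (t : ℝ) (ht0 : 0 ≤ t) (ht1 : t ≤ 1) :
    ‖(1 - t) • a + t • b‖ ^ 2 ≤ (1 - t) * ‖a‖ ^ 2 + t * ‖b‖ ^ 2 := by
  rw [norm_add_sq_real, norm_smul, norm_smul, real_inner_smul_left, real_inner_smul_right,
    Real.norm_eq_abs, Real.norm_eq_abs, abs_of_nonneg ht0, abs_of_nonneg (by linarith : (0:ℝ) ≤ 1 - t)]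
  nlinarith [real_inner_le_norm a b, sq_nonneg (‖a‖ - ‖b‖), norm_nonneg a, norm_nonneg b,
    mul_nonneg ht0 (by linarith : (0:ℝ) ≤ 1 - t)]

lemma norm_add_smul_sq {E : Type*} [NormedAddCommGroup E] [InnerProductSpace ℝ E]
    (u v : E) (t : ℝ) (ht0 : 0 ≤ t) :
    ‖u + t • v‖ ^ 2 = ‖u‖ ^ 2 + 2 * t * ⟪u, v⟫ + t ^ 2 * ‖v‖ ^ 2 := by
  rw [norm_add_sq_real, real_inner_smul_right, norm_smul, Real.norm_eq_abs, abs_of_nonneg ht0]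
  ring

set_option maxHeartbeats 1600000 in
/-- the first head machine satisfies the dual feasibility condition up to its dual residual s₁ = ρ(ζ₂^{l+1} − ζ₂^l). -/
theorem dsgcdmm_head_dual_residual_first
    (d K : ℕ) (hd : 1 ≤ d) (hK : 2 ≤ K) (hKeven : Even K)
    (n : ℕ → ℕ) (hn : ∀ k ∈ Icc 1 K, 1 ≤ n k)
    (y : ∀ k, EuclideanSpace ℝ (Fin (n k)))
    (P : ∀ k, Matrix (Fin (n k)) (Fin d) ℝ)
    (lam : ℝ) (hlam : 0 ≤ lam)
    (ω : ℕ → Fin d → ℝ) (hω : ∀ k ∈ Icc 1 K, ∀ j, 0 ≤ ω k j)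
    (C : EuclideanSpace ℝ (Fin d))
    (Q : ℕ → EuclideanSpace ℝ (Fin d) → ℝ)
    (hQ : ∀ k, ∀ x : EuclideanSpace ℝ (Fin d), Q k x =
      (1 / (2 * (n k : ℝ))) * ‖y k - (P k).toEuclideanLin x‖ ^ 2
        + lam * ∑ j, ω k j * |x j|)
    (ρ : ℝ) (hρ : 0 < ρ)
    (ζ : ℕ → ℕ → EuclideanSpace ℝ (Fin d))
    (μ : ℕ → ℕ → ℝ)
    (γ : ℕ → ℕ → EuclideanSpace ℝ (Fin d))
    (hdyn1 : ∀ l : ℕ, ∀ z : EuclideanSpace ℝ (Fin d),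
      Q 1 (ζ (l+1) 1) + μ l 1 * ⟪C, ζ (l+1) 1⟫ + (ρ/2) * ⟪C, ζ (l+1) 1⟫ ^ 2
          + ⟪γ l 1, ζ (l+1) 1 - ζ l 2⟫ + (ρ/2) * ‖ζ (l+1) 1 - ζ l 2‖ ^ 2
        ≤ Q 1 z + μ l 1 * ⟪C, z⟫ + (ρ/2) * ⟪C, z⟫ ^ 2
          + ⟪γ l 1, z - ζ l 2⟫ + (ρ/2) * ‖z - ζ l 2‖ ^ 2)
    (hdynodd : ∀ l : ℕ, ∀ k, Odd k → 1 < k → k < K → ∀ z : EuclideanSpace ℝ (Fin d),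
      Q k (ζ (l+1) k) + μ l k * ⟪C, ζ (l+1) k⟫ + (ρ/2) * ⟪C, ζ (l+1) k⟫ ^ 2
          + ⟪γ l (k-1), ζ l (k-1) - ζ (l+1) k⟫ + ⟪γ l k, ζ (l+1) k - ζ l (k+1)⟫
          + (ρ/2) * ‖ζ l (k-1) - ζ (l+1) k‖ ^ 2 + (ρ/2) * ‖ζ (l+1) k - ζ l (k+1)‖ ^ 2
        ≤ Q k z + μ l k * ⟪C, z⟫ + (ρ/2) * ⟪C, z⟫ ^ 2
          + ⟪γ l (k-1), ζ l (k-1) - z⟫ + ⟪γ l k, z - ζ l (k+1)⟫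
          + (ρ/2) * ‖ζ l (k-1) - z‖ ^ 2 + (ρ/2) * ‖z - ζ l (k+1)‖ ^ 2)
    (hdyneven : ∀ l : ℕ, ∀ k, Even k → 0 < k → k < K → ∀ z : EuclideanSpace ℝ (Fin d),
      Q k (ζ (l+1) k) + μ l k * ⟪C, ζ (l+1) k⟫ + (ρ/2) * ⟪C, ζ (l+1) k⟫ ^ 2
          + ⟪γ l (k-1), ζ (l+1) (k-1) - ζ (l+1) k⟫ + ⟪γ l k, ζ (l+1) k - ζ (l+1) (k+1)⟫
          + (ρ/2) * ‖ζ (l+1) (k-1) - ζ (l+1) k‖ ^ 2 + (ρ/2) * ‖ζ (l+1) k - ζ (l+1) (k+1)‖ ^ 2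
        ≤ Q k z + μ l k * ⟪C, z⟫ + (ρ/2) * ⟪C, z⟫ ^ 2
          + ⟪γ l (k-1), ζ (l+1) (k-1) - z⟫ + ⟪γ l k, z - ζ (l+1) (k+1)⟫
          + (ρ/2) * ‖ζ (l+1) (k-1) - z‖ ^ 2 + (ρ/2) * ‖z - ζ (l+1) (k+1)‖ ^ 2)
    (hdynK : ∀ l : ℕ, ∀ z : EuclideanSpace ℝ (Fin d),
      Q K (ζ (l+1) K) + μ l K * ⟪C, ζ (l+1) K⟫ + (ρ/2) * ⟪C, ζ (l+1) K⟫ ^ 2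
          + ⟪γ l (K-1), ζ (l+1) (K-1) - ζ (l+1) K⟫ + (ρ/2) * ‖ζ (l+1) (K-1) - ζ (l+1) K‖ ^ 2
        ≤ Q K z + μ l K * ⟪C, z⟫ + (ρ/2) * ⟪C, z⟫ ^ 2
          + ⟪γ l (K-1), ζ (l+1) (K-1) - z⟫ + (ρ/2) * ‖ζ (l+1) (K-1) - z‖ ^ 2)
    (hμ : ∀ l : ℕ, ∀ k ∈ Icc 1 K, μ (l+1) k = μ l k + ρ * ⟪C, ζ (l+1) k⟫)
    (hγ : ∀ l : ℕ, ∀ k ∈ Icc 1 (K-1),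
      γ (l+1) k = γ l k + ρ • (ζ (l+1) k - ζ (l+1) (k+1)))
    :
    ∀ l : ℕ, ∃ v : EuclideanSpace ℝ (Fin d), IsSubgrad (Q 1) (ζ (l+1) 1) v ∧
      v + μ (l+1) 1 • C + γ (l+1) 1 + ρ • (ζ (l+1) 2 - ζ l 2) = 0 := by
  intro l
  set x := ζ (l+1) 1 with hx
  set w := ζ l 2 with hw
  set m := μ l 1 with hm
  set g0 := γ l 1 with hg0
  set g : EuclideanSpace ℝ (Fin d) :=
    (m + ρ * ⟪C, x⟫) • C + g0 + ρ • (x - w) with hg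
  refine ⟨-g, ?_, ?_⟩
  · -- subgradient property
    have h1K : (1:ℕ) ∈ Icc 1 K := by
      simp [Finset.mem_Icc]; omega
    -- convexity of Q 1
    have hconv : ∀ (z : EuclideanSpace ℝ (Fin d)) (t : ℝ), 0 ≤ t → t ≤ 1 →
        Q 1 (x + t • (z - x)) ≤ (1 - t) * Q 1 x + t * Q 1 z := by
      intro z t ht0 ht1
      rw [hQ 1, hQ 1, hQ 1]
      have hA : y 1 - (P 1).toEuclideanLin (x + t • (z - x))
          = (1 - t) • (y 1 - (P 1).toEuclideanLin x) + t • (y 1 - (P 1).toEuclideanLin z) := by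
        rw [map_add, map_smul, map_sub]
        module
      have hq : ‖y 1 - (P 1).toEuclideanLin (x + t • (z - x))‖ ^ 2
          ≤ (1 - t) * ‖y 1 - (P 1).toEuclideanLin x‖ ^ 2
            + t * ‖y 1 - (P 1).toEuclideanLin z‖ ^ 2 := by
        rw [hA]
        exact sq_norm_combo _ _ t ht0 ht1
      have hcoef : (0:ℝ) ≤ 1 / (2 * (n 1 : ℝ)) := by positivity
      have hl1 : ∀ j, ω 1 j * |(x + t • (z - x)) j|
          ≤ (1 - t) * (ω 1 j * |x j|) + t * (ω 1 j * |z j|) := by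
        intro j
        have happ : (x + t • (z - x)) j = (1 - t) * x j + t * z j := by
          simp [PiLp.add_apply, PiLp.smul_apply, PiLp.sub_apply, smul_eq_mul]
          ring
        rw [happ]
        have habs : |(1 - t) * x j + t * z j| ≤ (1 - t) * |x j| + t * |z j| := by
          calc |(1 - t) * x j + t * z j| ≤ |(1 - t) * x j| + |t * z j| := abs_add_le _ _
            _ = (1 - t) * |x j| + t * |z j| := by
                rw [abs_mul, abs_mul, abs_of_nonneg ht0,
                  abs_of_nonneg (by linarith : (0:ℝ) ≤ 1 - t)]
        nlinarith [hω 1 h1K j, abs_nonneg (x j), abs_nonneg (z j)]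
      have hsum : ∑ j, ω 1 j * |(x + t • (z - x)) j|
          ≤ (1 - t) * (∑ j, ω 1 j * |x j|) + t * (∑ j, ω 1 j * |z j|) := by
        rw [Finset.mul_sum, Finset.mul_sum, ← Finset.sum_add_distrib]
        exact Finset.sum_le_sum fun j _ => hl1 j
      nlinarith [mul_le_mul_of_nonneg_left hq hcoef, mul_le_mul_of_nonneg_left hsum hlam]
    -- key inequality
    intro z
    set b : ℝ := ⟪C, z - x⟫ with hb
    set R : ℝ := ρ/2 * b ^ 2 + ρ/2 * ‖z - x‖ ^ 2 with hR
    have hGexp : ⟪g, z - x⟫ = (m + ρ * ⟪C, x⟫) * b + ⟪g0, z - x⟫ + ρ * ⟪x - w, z - x⟫ := by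
      rw [hg, inner_add_left, inner_add_left, real_inner_smul_left, real_inner_smul_left]
    have key : ∀ t : ℝ, 0 < t → t ≤ 1 →
        Q 1 x - Q 1 z - ⟪g, z - x⟫ ≤ t * R := by
      intro t ht0 ht1
      have h1 := hdyn1 l (x + t • (z - x))
      have e1 : ⟪C, x + t • (z - x)⟫ = ⟪C, x⟫ + t * b := by
        rw [inner_add_right, real_inner_smul_right]
      have e2 : (x + t • (z - x)) - w = (x - w) + t • (z - x) := by abel
      have e3 : ‖(x - w) + t • (z - x)‖ ^ 2
          = ‖x - w‖ ^ 2 + 2 * t * ⟪x - w, z - x⟫ + t ^ 2 * ‖z - x‖ ^ 2 :=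
        norm_add_smul_sq _ _ t ht0.le
      have e4 : ⟪g0, (x - w) + t • (z - x)⟫ = ⟪g0, x - w⟫ + t * ⟪g0, z - x⟫ := by
        rw [inner_add_right, real_inner_smul_right]
      rw [e2, e3, e4, e1] at h1
      have hc := hconv z t ht0.le ht1
      have h2 : t * (Q 1 x - Q 1 z - ⟪g, z - x⟫) ≤ t * (t * R) := by
        rw [hGexp, hR]
        nlinarith [h1, hc]
      exact le_of_mul_le_mul_left h2 ht0
    have hRnn : 0 ≤ R := by positivity
    have hfinal : Q 1 x - Q 1 z - ⟪g, z - x⟫ ≤ 0 := by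
      refine le_of_forall_pos_le_add ?_
      intro ε hε
      have htpos : 0 < min 1 (ε / (R + 1)) := by
        apply lt_min one_pos
        positivity
      have := key (min 1 (ε / (R + 1))) htpos (min_le_left _ _)
      have hle : min 1 (ε / (R + 1)) * R ≤ ε := by
        have h1 : min 1 (ε / (R + 1)) ≤ ε / (R + 1) := min_le_right _ _
        have h2 : min 1 (ε / (R + 1)) * R ≤ (ε / (R + 1)) * R :=
          mul_le_mul_of_nonneg_right h1 hRnn
        have h3 : (ε / (R + 1)) * R ≤ ε := by
          rw [div_mul_eq_mul_div, div_le_iff₀ (by linarith)]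
          nlinarith
        linarith
      linarith
    have : ⟪-g, z - x⟫ = -⟪g, z - x⟫ := inner_neg_left _ _
    rw [this]
    linarith
  · -- the algebraic identity
    have h1K : (1:ℕ) ∈ Icc 1 K := by simp [Finset.mem_Icc]; omega
    have h1K1 : (1:ℕ) ∈ Icc 1 (K-1) := by simp [Finset.mem_Icc]; omega
    rw [hμ l 1 h1K, hγ l 1 h1K1, hg]
    simp only [add_smul]
    module
end
end

section
/- For every iteration index l and every odd machine index k with 1 < k < K, there exists a subgradient v of Q_k at ζ_k^{l+1} such that v + μ_k^{l+1} C − γ_{k−1}^{l+1} + γ_k^{l+1} + s_k^{l+1} = 0, where s_k^{l+1} = ρ(ζ_{k−1}^{l+1} − ζ_{k−1}^l) + ρ(ζ_{k+1}^{l+1} − ζ_{k+1}^l) is the dual residual of head machine k. In other words, each interior head machine satisfies the dual feasibility condition up to its dual residual s_k^{l+1}. -/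
open Finset Filter
open scoped RealInnerProductSpace

noncomputable section

lemma my_normsq_convex {d : ℕ} (u v : EuclideanSpace ℝ (Fin d)) (t : ℝ)
    (ht0 : 0 ≤ t) (ht1 : t ≤ 1) :
    ‖(1-t) • u + t • v‖^2 ≤ (1-t) * ‖u‖^2 + t * ‖v‖^2 := by
  have h1 : ‖(1-t) • u + t • v‖ ≤ (1-t) * ‖u‖ + t * ‖v‖ := by
    refine (norm_add_le _ _).trans ?_
    rw [norm_smul, norm_smul, Real.norm_eq_abs, Real.norm_eq_abs,
      abs_of_nonneg ht0, abs_of_nonneg (by linarith)]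
  have h2 := mul_self_le_mul_self (norm_nonneg ((1-t) • u + t • v)) h1
  have h3 : 0 ≤ t * (1 - t) * (‖u‖ - ‖v‖)^2 :=
    mul_nonneg (mul_nonneg ht0 (by linarith)) (sq_nonneg _)
  nlinarith [h2, h3]

lemma my_quad_expand {d : ℕ} (ρ m : ℝ) (C ga gb a b x w : EuclideanSpace ℝ (Fin d)) (t : ℝ) :
    (m * ⟪C, x + t • w⟫ + (ρ/2) * ⟪C, x + t • w⟫^2
      + ⟪ga, a - (x + t • w)⟫ + ⟪gb, (x + t • w) - b⟫
      + (ρ/2) * ‖a - (x + t • w)‖^2 + (ρ/2) * ‖(x + t • w) - b‖^2)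
    = (m * ⟪C, x⟫ + (ρ/2) * ⟪C, x⟫^2 + ⟪ga, a - x⟫ + ⟪gb, x - b⟫
      + (ρ/2) * ‖a - x‖^2 + (ρ/2) * ‖x - b‖^2)
      + t * ⟪m • C + (ρ * ⟪C, x⟫) • C - ga + gb + ρ • (x - a) + ρ • (x - b), w⟫
      + t^2 * ((ρ/2) * ⟪C, w⟫^2 + ρ * ‖w‖^2) := by
  have h1 : a - (x + t • w) = (a - x) - t • w := by abel
  have h2 : (x + t • w) - b = (x - b) + t • w := by abel
  have hsm : ‖t • w‖^2 = t^2 * ‖w‖^2 := by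
    rw [norm_smul, mul_pow, Real.norm_eq_abs, sq_abs]
  rw [h1, h2, norm_sub_sq_real, norm_add_sq_real, hsm]
  simp only [inner_add_right, inner_sub_right, inner_add_left, inner_sub_left,
    real_inner_smul_left, real_inner_smul_right]
  ring

lemma my_Q_convex {d nn : ℕ} (y : EuclideanSpace ℝ (Fin nn)) (P : Matrix (Fin nn) (Fin d) ℝ)
    (lam : ℝ) (hlam : 0 ≤ lam) (ω : Fin d → ℝ) (hω : ∀ j, 0 ≤ ω j) (c : ℝ) (hc : 0 ≤ c)
    (x z : EuclideanSpace ℝ (Fin d)) (t : ℝ) (ht0 : 0 ≤ t) (ht1 : t ≤ 1) :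
    c * ‖y - P.toEuclideanLin (x + t • (z - x))‖^2
        + lam * ∑ j, ω j * |(x + t • (z - x)) j|
      ≤ (1-t) * (c * ‖y - P.toEuclideanLin x‖^2 + lam * ∑ j, ω j * |x j|)
        + t * (c * ‖y - P.toEuclideanLin z‖^2 + lam * ∑ j, ω j * |z j|) := by
  have ht1' : 0 ≤ 1 - t := by linarith
  have hx : x + t • (z - x) = (1-t) • x + t • z := by
    rw [smul_sub, sub_smul, one_smul]; abel
  have hT : y - P.toEuclideanLin (x + t • (z - x))
      = (1-t) • (y - P.toEuclideanLin x) + t • (y - P.toEuclideanLin z) := by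
    rw [hx, map_add, map_smul, map_smul]
    module
  have h1 : c * ‖y - P.toEuclideanLin (x + t • (z - x))‖^2
      ≤ (1-t) * (c * ‖y - P.toEuclideanLin x‖^2) + t * (c * ‖y - P.toEuclideanLin z‖^2) := by
    rw [hT]
    have := my_normsq_convex (y - P.toEuclideanLin x) (y - P.toEuclideanLin z) t ht0 ht1
    nlinarith [this]
  have h2 : lam * ∑ j, ω j * |(x + t • (z - x)) j|
      ≤ (1-t) * (lam * ∑ j, ω j * |x j|) + t * (lam * ∑ j, ω j * |z j|) := by
    have hstep : ∀ j : Fin d, ω j * |(x + t • (z - x)) j|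
        ≤ (1-t) * (ω j * |x j|) + t * (ω j * |z j|) := by
      intro j
      have happ : (x + t • (z - x)) j = (1-t) * x j + t * z j := by
        simp only [PiLp.add_apply, PiLp.smul_apply, PiLp.sub_apply, smul_eq_mul]
        ring
      rw [happ]
      have habs : |(1-t) * x j + t * z j| ≤ (1-t) * |x j| + t * |z j| := by
        refine (abs_add_le _ _).trans ?_
        rw [abs_mul, abs_mul, abs_of_nonneg ht0, abs_of_nonneg ht1']
      calc ω j * |(1-t) * x j + t * z j| ≤ ω j * ((1-t) * |x j| + t * |z j|) :=
            mul_le_mul_of_nonneg_left habs (hω j)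
        _ = (1-t) * (ω j * |x j|) + t * (ω j * |z j|) := by ring
    calc lam * ∑ j, ω j * |(x + t • (z - x)) j|
        ≤ lam * ∑ j, ((1-t) * (ω j * |x j|) + t * (ω j * |z j|)) :=
          mul_le_mul_of_nonneg_left (Finset.sum_le_sum fun j _ => hstep j) hlam
      _ = (1-t) * (lam * ∑ j, ω j * |x j|) + t * (lam * ∑ j, ω j * |z j|) := by
          rw [Finset.sum_add_distrib, ← Finset.mul_sum, ← Finset.mul_sum]; ring
  linarith

/-- each interior head machine (odd k with 1 < k < K) satisfies the dual feasibility condition up to its dual residual. -/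
theorem dsgcdmm_head_dual_residual_interior
    (d K : ℕ) (hd : 1 ≤ d) (hK : 2 ≤ K) (hKeven : Even K)
    (n : ℕ → ℕ) (hn : ∀ k ∈ Icc 1 K, 1 ≤ n k)
    (y : ∀ k, EuclideanSpace ℝ (Fin (n k)))
    (P : ∀ k, Matrix (Fin (n k)) (Fin d) ℝ)
    (lam : ℝ) (hlam : 0 ≤ lam)
    (ω : ℕ → Fin d → ℝ) (hω : ∀ k ∈ Icc 1 K, ∀ j, 0 ≤ ω k j)
    (C : EuclideanSpace ℝ (Fin d))
    (Q : ℕ → EuclideanSpace ℝ (Fin d) → ℝ)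
    (hQ : ∀ k, ∀ x : EuclideanSpace ℝ (Fin d), Q k x =
      (1 / (2 * (n k : ℝ))) * ‖y k - (P k).toEuclideanLin x‖ ^ 2
        + lam * ∑ j, ω k j * |x j|)
    (ρ : ℝ) (hρ : 0 < ρ)
    (ζ : ℕ → ℕ → EuclideanSpace ℝ (Fin d))
    (μ : ℕ → ℕ → ℝ)
    (γ : ℕ → ℕ → EuclideanSpace ℝ (Fin d))
    (hdyn1 : ∀ l : ℕ, ∀ z : EuclideanSpace ℝ (Fin d),
      Q 1 (ζ (l+1) 1) + μ l 1 * ⟪C, ζ (l+1) 1⟫ + (ρ/2) * ⟪C, ζ (l+1) 1⟫ ^ 2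
          + ⟪γ l 1, ζ (l+1) 1 - ζ l 2⟫ + (ρ/2) * ‖ζ (l+1) 1 - ζ l 2‖ ^ 2
        ≤ Q 1 z + μ l 1 * ⟪C, z⟫ + (ρ/2) * ⟪C, z⟫ ^ 2
          + ⟪γ l 1, z - ζ l 2⟫ + (ρ/2) * ‖z - ζ l 2‖ ^ 2)
    (hdynodd : ∀ l : ℕ, ∀ k, Odd k → 1 < k → k < K → ∀ z : EuclideanSpace ℝ (Fin d),
      Q k (ζ (l+1) k) + μ l k * ⟪C, ζ (l+1) k⟫ + (ρ/2) * ⟪C, ζ (l+1) k⟫ ^ 2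
          + ⟪γ l (k-1), ζ l (k-1) - ζ (l+1) k⟫ + ⟪γ l k, ζ (l+1) k - ζ l (k+1)⟫
          + (ρ/2) * ‖ζ l (k-1) - ζ (l+1) k‖ ^ 2 + (ρ/2) * ‖ζ (l+1) k - ζ l (k+1)‖ ^ 2
        ≤ Q k z + μ l k * ⟪C, z⟫ + (ρ/2) * ⟪C, z⟫ ^ 2
          + ⟪γ l (k-1), ζ l (k-1) - z⟫ + ⟪γ l k, z - ζ l (k+1)⟫
          + (ρ/2) * ‖ζ l (k-1) - z‖ ^ 2 + (ρ/2) * ‖z - ζ l (k+1)‖ ^ 2)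
    (hdyneven : ∀ l : ℕ, ∀ k, Even k → 0 < k → k < K → ∀ z : EuclideanSpace ℝ (Fin d),
      Q k (ζ (l+1) k) + μ l k * ⟪C, ζ (l+1) k⟫ + (ρ/2) * ⟪C, ζ (l+1) k⟫ ^ 2
          + ⟪γ l (k-1), ζ (l+1) (k-1) - ζ (l+1) k⟫ + ⟪γ l k, ζ (l+1) k - ζ (l+1) (k+1)⟫
          + (ρ/2) * ‖ζ (l+1) (k-1) - ζ (l+1) k‖ ^ 2 + (ρ/2) * ‖ζ (l+1) k - ζ (l+1) (k+1)‖ ^ 2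
        ≤ Q k z + μ l k * ⟪C, z⟫ + (ρ/2) * ⟪C, z⟫ ^ 2
          + ⟪γ l (k-1), ζ (l+1) (k-1) - z⟫ + ⟪γ l k, z - ζ (l+1) (k+1)⟫
          + (ρ/2) * ‖ζ (l+1) (k-1) - z‖ ^ 2 + (ρ/2) * ‖z - ζ (l+1) (k+1)‖ ^ 2)
    (hdynK : ∀ l : ℕ, ∀ z : EuclideanSpace ℝ (Fin d),
      Q K (ζ (l+1) K) + μ l K * ⟪C, ζ (l+1) K⟫ + (ρ/2) * ⟪C, ζ (l+1) K⟫ ^ 2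
          + ⟪γ l (K-1), ζ (l+1) (K-1) - ζ (l+1) K⟫ + (ρ/2) * ‖ζ (l+1) (K-1) - ζ (l+1) K‖ ^ 2
        ≤ Q K z + μ l K * ⟪C, z⟫ + (ρ/2) * ⟪C, z⟫ ^ 2
          + ⟪γ l (K-1), ζ (l+1) (K-1) - z⟫ + (ρ/2) * ‖ζ (l+1) (K-1) - z‖ ^ 2)
    (hμ : ∀ l : ℕ, ∀ k ∈ Icc 1 K, μ (l+1) k = μ l k + ρ * ⟪C, ζ (l+1) k⟫)
    (hγ : ∀ l : ℕ, ∀ k ∈ Icc 1 (K-1),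
      γ (l+1) k = γ l k + ρ • (ζ (l+1) k - ζ (l+1) (k+1)))
    :
    ∀ l : ℕ, ∀ k, Odd k → 1 < k → k < K →
      ∃ v : EuclideanSpace ℝ (Fin d), IsSubgrad (Q k) (ζ (l+1) k) v ∧
        v + μ (l+1) k • C - γ (l+1) (k-1) + γ (l+1) k
          + (ρ • (ζ (l+1) (k-1) - ζ l (k-1)) + ρ • (ζ (l+1) (k+1) - ζ l (k+1))) = 0 := by
  intro l k hkodd hk1 hkK
  have hkIcc : k ∈ Icc 1 K := by simp only [Finset.mem_Icc]; omega
  have hk1Icc : k - 1 ∈ Icc 1 (K-1) := by simp only [Finset.mem_Icc]; omega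
  have hkIcc' : k ∈ Icc 1 (K-1) := by simp only [Finset.mem_Icc]; omega
  refine ⟨-(μ l k • C + (ρ * ⟪C, ζ (l+1) k⟫) • C - γ l (k-1) + γ l k
      + ρ • (ζ (l+1) k - ζ l (k-1)) + ρ • (ζ (l+1) k - ζ l (k+1))), ?_, ?_⟩
  · intro z
    have key : ∀ t : ℝ, 0 < t → t ≤ 1 →
        Q k (ζ (l+1) k) - Q k z
          - ⟪μ l k • C + (ρ * ⟪C, ζ (l+1) k⟫) • C - γ l (k-1) + γ l k
              + ρ • (ζ (l+1) k - ζ l (k-1)) + ρ • (ζ (l+1) k - ζ l (k+1)), z - ζ (l+1) k⟫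
          ≤ t * ((ρ/2) * ⟪C, z - ζ (l+1) k⟫^2 + ρ * ‖z - ζ (l+1) k‖^2) := by
      intro t ht0 ht1
      have hmin := hdynodd l k hkodd hk1 hkK (ζ (l+1) k + t • (z - ζ (l+1) k))
      have hexp := my_quad_expand ρ (μ l k) C (γ l (k-1)) (γ l k) (ζ l (k-1)) (ζ l (k+1))
        (ζ (l+1) k) (z - ζ (l+1) k) t
      have hconv : Q k (ζ (l+1) k + t • (z - ζ (l+1) k))
          ≤ (1-t) * Q k (ζ (l+1) k) + t * Q k z := by
        simp only [hQ]
        exact my_Q_convex (y k) (P k) lam hlam (ω k) (hω k hkIcc) _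
          (by positivity) _ _ t ht0.le ht1
      have h3 : Q k (ζ (l+1) k) ≤ Q k (ζ (l+1) k + t • (z - ζ (l+1) k))
          + t * ⟪μ l k • C + (ρ * ⟪C, ζ (l+1) k⟫) • C - γ l (k-1) + γ l k
              + ρ • (ζ (l+1) k - ζ l (k-1)) + ρ • (ζ (l+1) k - ζ l (k+1)), z - ζ (l+1) k⟫
          + t^2 * ((ρ/2) * ⟪C, z - ζ (l+1) k⟫^2 + ρ * ‖z - ζ (l+1) k‖^2) := by
        linarith [hmin, hexp]
      have h7 : t * (Q k (ζ (l+1) k) - Q k z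
          - ⟪μ l k • C + (ρ * ⟪C, ζ (l+1) k⟫) • C - γ l (k-1) + γ l k
              + ρ • (ζ (l+1) k - ζ l (k-1)) + ρ • (ζ (l+1) k - ζ l (k+1)), z - ζ (l+1) k⟫
          - t * ((ρ/2) * ⟪C, z - ζ (l+1) k⟫^2 + ρ * ‖z - ζ (l+1) k‖^2)) ≤ t * 0 := by
        rw [mul_zero]; nlinarith [h3, hconv]
      have h8 := le_of_mul_le_mul_left h7 ht0
      linarith
    have hR : 0 ≤ (ρ/2) * ⟪C, z - ζ (l+1) k⟫^2 + ρ * ‖z - ζ (l+1) k‖^2 := by positivity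
    have hfinal : Q k (ζ (l+1) k) - Q k z
        - ⟪μ l k • C + (ρ * ⟪C, ζ (l+1) k⟫) • C - γ l (k-1) + γ l k
            + ρ • (ζ (l+1) k - ζ l (k-1)) + ρ • (ζ (l+1) k - ζ l (k+1)), z - ζ (l+1) k⟫
        ≤ 0 := by
      refine le_of_forall_pos_le_add ?_
      intro ε hε
      set R := (ρ/2) * ⟪C, z - ζ (l+1) k⟫^2 + ρ * ‖z - ζ (l+1) k‖^2 with hRdef
      have hR1 : (0:ℝ) < R + 1 := by linarith
      have htpos : 0 < min 1 (ε / (R+1)) := lt_min one_pos (div_pos hε hR1)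
      have hkey := key (min 1 (ε / (R+1))) htpos (min_le_left _ _)
      have hle : min 1 (ε / (R+1)) * R ≤ ε := by
        have h1 : min 1 (ε / (R+1)) ≤ ε / (R+1) := min_le_right _ _
        have h2 : min 1 (ε / (R+1)) * R ≤ (ε / (R+1)) * R :=
          mul_le_mul_of_nonneg_right h1 hR
        have h3 : (ε / (R+1)) * R ≤ (ε / (R+1)) * (R+1) :=
          mul_le_mul_of_nonneg_left (by linarith) (le_of_lt (div_pos hε hR1))
        have h4 : (ε / (R+1)) * (R+1) = ε := div_mul_cancel₀ ε (by linarith)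
        linarith
      linarith
    rw [inner_neg_left]
    linarith
  · have hkm : k - 1 + 1 = k := by omega
    have e1 := hμ l k hkIcc
    have e2 := hγ l (k-1) hk1Icc
    have e3 := hγ l k hkIcc'
    rw [hkm] at e2
    rw [e1, e2, e3]
    module
end
end

section
/- (Theorem 1, part 1.) Under the DSGCDMM dynamics and the existence of a saddle point, the primal residual of the zero-sum constraint converges to zero: for every k = 1,…,K, g_k^l = C⊤ζ_k^l → 0 as l → ∞. -/
open Finset Filter
open scoped RealInnerProductSpace

noncomputable section



lemma dsg_aux_nonneg_limit (A c : ℝ) (hc : 0 ≤ c)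
    (h : ∀ t : ℝ, 0 < t → t ≤ 1 → 0 ≤ A + t * c) : 0 ≤ A := by
  by_contra hA
  push_neg at hA
  have hc1 : (0:ℝ) < 2 * (c + 1) := by linarith
  set t : ℝ := min 1 (-A / (2 * (c + 1))) with ht
  have ht0 : 0 < t := lt_min one_pos (div_pos (by linarith) hc1)
  have ht1 : t ≤ 1 := min_le_left _ _
  have ht2 : t ≤ -A / (2 * (c + 1)) := min_le_right _ _
  have h3 : t * c ≤ (-A / (2 * (c + 1))) * (c + 1) := by
    calc t * c ≤ t * (c + 1) := by nlinarith
    _ ≤ (-A / (2 * (c + 1))) * (c + 1) := by nlinarith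
  have h4 : (-A / (2 * (c + 1))) * (c + 1) = -A / 2 := by field_simp
  have := h t ht0 ht1
  rw [h4] at h3
  linarith

lemma dsg_vi_of_min {E : Type*} [NormedAddCommGroup E] [InnerProductSpace ℝ E]
    (f S : E → ℝ) (x z : E) (L c : ℝ)
    (hconv : ∀ t : ℝ, 0 ≤ t → t ≤ 1 → f (x + t • (z - x)) ≤ (1 - t) * f x + t * f z)
    (hS : ∀ t : ℝ, S (x + t • (z - x)) = S x + t * L + t ^ 2 * c)
    (hc : 0 ≤ c)
    (hmin : ∀ u, f x + S x ≤ f u + S u) :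
    f x ≤ f z + L := by
  have key : 0 ≤ (f z + L - f x) := by
    apply dsg_aux_nonneg_limit _ c hc
    intro t ht0 ht1
    have h1 := hmin (x + t • (z - x))
    have h2 := hconv t ht0.le ht1
    rw [hS t] at h1
    have h4 : 0 ≤ t * ((f z + L - f x) + t * c) := by nlinarith
    exact (mul_nonneg_iff_of_pos_left ht0).mp h4
  linarith

lemma dsg_expand_norm_add {E : Type*} [NormedAddCommGroup E] [InnerProductSpace ℝ E]
    (a b : E) (t : ℝ) :
    ‖a + t • b‖ ^ 2 = ‖a‖ ^ 2 + t * (2 * ⟪a, b⟫) + t ^ 2 * ‖b‖ ^ 2 := by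
  rw [norm_add_sq_real, real_inner_smul_right, norm_smul]
  simp [mul_pow, sq_abs, Real.norm_eq_abs]
  ring

lemma dsg_expand_norm_sub {E : Type*} [NormedAddCommGroup E] [InnerProductSpace ℝ E]
    (a b : E) (t : ℝ) :
    ‖a - t • b‖ ^ 2 = ‖a‖ ^ 2 - t * (2 * ⟪a, b⟫) + t ^ 2 * ‖b‖ ^ 2 := by
  rw [norm_sub_sq_real, real_inner_smul_right, norm_smul]
  simp [mul_pow, sq_abs, Real.norm_eq_abs]
  ring

lemma dsg_inner_cross_bound {E : Type*} [NormedAddCommGroup E] [InnerProductSpace ℝ E]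
    (a b s u : E) {ρ : ℝ} (hρ : 0 < ρ) :
    ρ * ⟪a - b, s - u⟫ ≤ ρ/2 * ‖u - a‖^2 + ρ/2 * (‖b - s‖^2 - ‖a - s‖^2) := by
  have h1 := norm_sub_sq_real u a
  have h2 := norm_sub_sq_real u b
  have h3 := norm_sub_sq_real b s
  have h4 := norm_sub_sq_real a s
  have h5 : ⟪a - b, s - u⟫ = ⟪a,s⟫ - ⟪a,u⟫ - ⟪b,s⟫ + ⟪b,u⟫ := by
    simp [inner_sub_left, inner_sub_right]; ring
  have c1 := real_inner_comm u a
  have c2 := real_inner_comm u b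
  have key : ‖u - a‖^2 + (‖b - s‖^2 - ‖a - s‖^2) - 2*⟪a-b, s-u⟫ = ‖u - b‖^2 := by
    rw [h1, h2, h3, h4, h5, c1, c2]; ring
  have hnn : 0 ≤ ρ/2 * ‖u - b‖^2 := by positivity
  have key2 : ρ * ⟪a-b, s-u⟫ = ρ/2*‖u-a‖^2 + ρ/2*(‖b-s‖^2 - ‖a-s‖^2) - ρ/2*‖u-b‖^2 := by
    linear_combination (-(ρ/2)) * key
  linarith

lemma dsg_sum_shift (f : ℕ → ℝ) (a b : ℕ) :
    ∑ k ∈ Icc (a+1) (b+1), f k = ∑ k ∈ Icc a b, f (k+1) := by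
  rw [← Finset.map_add_right_Icc a b 1, Finset.sum_map]
  rfl

lemma dsg_sum_bot (f : ℕ → ℝ) {K : ℕ} (hK : 2 ≤ K) :
    ∑ k ∈ Icc 1 K, f k = f 1 + ∑ k ∈ Icc 1 (K-1), f (k+1) := by
  have h1 : (Icc 1 K).erase 1 = Icc 2 K := by
    rw [Finset.Icc_erase_left]
    exact (Finset.Icc_add_one_left_eq_Ioc 1 K).symm
  have h2 : (1:ℕ) ∈ Icc 1 K := by simp; omega
  have h3 := Finset.sum_erase_add (Icc 1 K) f h2
  rw [h1] at h3
  have h4 : Icc 2 K = Icc (1+1) ((K-1)+1) := by congr 1; omega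
  rw [h4, dsg_sum_shift] at h3
  linarith

lemma dsg_sum_top (f : ℕ → ℝ) {K : ℕ} (hK : 2 ≤ K) :
    ∑ k ∈ Icc 1 K, f k = (∑ k ∈ Icc 1 (K-1), f k) + f K := by
  have h : K = (K-1) + 1 := by omega
  conv_lhs => rw [h]
  rw [Finset.sum_Icc_succ_top (by omega)]
  rw [← h]


lemma dsg_sqnorm_convex {E F : Type*} [NormedAddCommGroup E] [InnerProductSpace ℝ E]
    [NormedAddCommGroup F] [InnerProductSpace ℝ F]
    (yk : F) (T : E →ₗ[ℝ] F) (x z : E) (t : ℝ) (ht0 : 0 ≤ t) (ht1 : t ≤ 1) :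
    ‖yk - T (x + t • (z - x))‖ ^ 2 ≤ (1-t) * ‖yk - T x‖ ^ 2 + t * ‖yk - T z‖ ^ 2 := by
  set a := yk - T x with ha
  set b := yk - T z with hb
  have hv : yk - T (x + t • (z - x)) = a + t • (b - a) := by
    rw [ha, hb]
    rw [map_add, map_smul, map_sub]
    module
  rw [hv]
  have h1 : ‖a + t • (b - a)‖ ^ 2 = ‖a‖^2 + t * (2 * ⟪a, b - a⟫) + t^2 * ‖b - a‖^2 := by
    rw [norm_add_sq_real, real_inner_smul_right, norm_smul]
    simp [mul_pow, sq_abs, Real.norm_eq_abs]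
    ring
  have h2 : ⟪a, b - a⟫ = ⟪a, b⟫ - ‖a‖^2 := by
    rw [inner_sub_right, real_inner_self_eq_norm_sq]
  have h3 : ‖b - a‖^2 = ‖b‖^2 - 2*⟪b,a⟫ + ‖a‖^2 := norm_sub_sq_real b a
  have h4 := real_inner_comm a b
  nlinarith [sq_nonneg ‖b - a‖, mul_nonneg (mul_nonneg ht0 (by linarith : (0:ℝ) ≤ 1 - t)) (sq_nonneg ‖b - a‖)]

lemma dsg_abs_sum_convex {d : ℕ} (w : Fin d → ℝ) (hw : ∀ j, 0 ≤ w j)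
    (x z : EuclideanSpace ℝ (Fin d)) (t : ℝ) (ht0 : 0 ≤ t) (ht1 : t ≤ 1) :
    ∑ j, w j * |(x + t • (z - x)) j| ≤ (1-t) * ∑ j, w j * |x j| + t * ∑ j, w j * |z j| := by
  have key : ∀ j, w j * |(x + t • (z - x)) j| ≤ (1-t) * (w j * |x j|) + t * (w j * |z j|) := by
    intro j
    have hcoord : (x + t • (z - x)) j = (1-t) * x j + t * z j := by
      simp [PiLp.add_apply, PiLp.smul_apply, PiLp.sub_apply, smul_eq_mul]
      ring
    rw [hcoord]
    have habs : |(1-t) * x j + t * z j| ≤ (1-t) * |x j| + t * |z j| := by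
      calc |(1-t) * x j + t * z j| ≤ |(1-t) * x j| + |t * z j| := abs_add_le _ _
      _ = (1-t) * |x j| + t * |z j| := by
          rw [abs_mul, abs_mul, abs_of_nonneg (by linarith : (0:ℝ) ≤ 1 - t), abs_of_nonneg ht0]
    nlinarith [hw j, abs_nonneg (x j), abs_nonneg (z j)]
  calc ∑ j, w j * |(x + t • (z - x)) j| ≤ ∑ j, ((1-t) * (w j * |x j|) + t * (w j * |z j|)) :=
        Finset.sum_le_sum (fun j _ => key j)
  _ = (1-t) * ∑ j, w j * |x j| + t * ∑ j, w j * |z j| := by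
      rw [Finset.sum_add_distrib, Finset.mul_sum, Finset.mul_sum]
set_option maxHeartbeats 1000000 in
/-- Theorem 1, part 1: the primal residual of the zero-sum constraint converges to zero, g_k^l = C⊤ζ_k^l → 0. -/
theorem dsgcdmm_zero_sum_residual_tendsto_zero
    (d K : ℕ) (hd : 1 ≤ d) (hK : 2 ≤ K) (hKeven : Even K)
    (n : ℕ → ℕ) (hn : ∀ k ∈ Icc 1 K, 1 ≤ n k)
    (y : ∀ k, EuclideanSpace ℝ (Fin (n k)))
    (P : ∀ k, Matrix (Fin (n k)) (Fin d) ℝ)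
    (lam : ℝ) (hlam : 0 ≤ lam)
    (ω : ℕ → Fin d → ℝ) (hω : ∀ k ∈ Icc 1 K, ∀ j, 0 ≤ ω k j)
    (C : EuclideanSpace ℝ (Fin d))
    (Q : ℕ → EuclideanSpace ℝ (Fin d) → ℝ)
    (hQ : ∀ k, ∀ x : EuclideanSpace ℝ (Fin d), Q k x =
      (1 / (2 * (n k : ℝ))) * ‖y k - (P k).toEuclideanLin x‖ ^ 2
        + lam * ∑ j, ω k j * |x j|)
    (ρ : ℝ) (hρ : 0 < ρ)
    (ζ : ℕ → ℕ → EuclideanSpace ℝ (Fin d))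
    (μ : ℕ → ℕ → ℝ)
    (γ : ℕ → ℕ → EuclideanSpace ℝ (Fin d))
    (hdyn1 : ∀ l : ℕ, ∀ z : EuclideanSpace ℝ (Fin d),
      Q 1 (ζ (l+1) 1) + μ l 1 * ⟪C, ζ (l+1) 1⟫ + (ρ/2) * ⟪C, ζ (l+1) 1⟫ ^ 2
          + ⟪γ l 1, ζ (l+1) 1 - ζ l 2⟫ + (ρ/2) * ‖ζ (l+1) 1 - ζ l 2‖ ^ 2
        ≤ Q 1 z + μ l 1 * ⟪C, z⟫ + (ρ/2) * ⟪C, z⟫ ^ 2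
          + ⟪γ l 1, z - ζ l 2⟫ + (ρ/2) * ‖z - ζ l 2‖ ^ 2)
    (hdynodd : ∀ l : ℕ, ∀ k, Odd k → 1 < k → k < K → ∀ z : EuclideanSpace ℝ (Fin d),
      Q k (ζ (l+1) k) + μ l k * ⟪C, ζ (l+1) k⟫ + (ρ/2) * ⟪C, ζ (l+1) k⟫ ^ 2
          + ⟪γ l (k-1), ζ l (k-1) - ζ (l+1) k⟫ + ⟪γ l k, ζ (l+1) k - ζ l (k+1)⟫
          + (ρ/2) * ‖ζ l (k-1) - ζ (l+1) k‖ ^ 2 + (ρ/2) * ‖ζ (l+1) k - ζ l (k+1)‖ ^ 2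
        ≤ Q k z + μ l k * ⟪C, z⟫ + (ρ/2) * ⟪C, z⟫ ^ 2
          + ⟪γ l (k-1), ζ l (k-1) - z⟫ + ⟪γ l k, z - ζ l (k+1)⟫
          + (ρ/2) * ‖ζ l (k-1) - z‖ ^ 2 + (ρ/2) * ‖z - ζ l (k+1)‖ ^ 2)
    (hdyneven : ∀ l : ℕ, ∀ k, Even k → 0 < k → k < K → ∀ z : EuclideanSpace ℝ (Fin d),
      Q k (ζ (l+1) k) + μ l k * ⟪C, ζ (l+1) k⟫ + (ρ/2) * ⟪C, ζ (l+1) k⟫ ^ 2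
          + ⟪γ l (k-1), ζ (l+1) (k-1) - ζ (l+1) k⟫ + ⟪γ l k, ζ (l+1) k - ζ (l+1) (k+1)⟫
          + (ρ/2) * ‖ζ (l+1) (k-1) - ζ (l+1) k‖ ^ 2 + (ρ/2) * ‖ζ (l+1) k - ζ (l+1) (k+1)‖ ^ 2
        ≤ Q k z + μ l k * ⟪C, z⟫ + (ρ/2) * ⟪C, z⟫ ^ 2
          + ⟪γ l (k-1), ζ (l+1) (k-1) - z⟫ + ⟪γ l k, z - ζ (l+1) (k+1)⟫
          + (ρ/2) * ‖ζ (l+1) (k-1) - z‖ ^ 2 + (ρ/2) * ‖z - ζ (l+1) (k+1)‖ ^ 2)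
    (hdynK : ∀ l : ℕ, ∀ z : EuclideanSpace ℝ (Fin d),
      Q K (ζ (l+1) K) + μ l K * ⟪C, ζ (l+1) K⟫ + (ρ/2) * ⟪C, ζ (l+1) K⟫ ^ 2
          + ⟪γ l (K-1), ζ (l+1) (K-1) - ζ (l+1) K⟫ + (ρ/2) * ‖ζ (l+1) (K-1) - ζ (l+1) K‖ ^ 2
        ≤ Q K z + μ l K * ⟪C, z⟫ + (ρ/2) * ⟪C, z⟫ ^ 2
          + ⟪γ l (K-1), ζ (l+1) (K-1) - z⟫ + (ρ/2) * ‖ζ (l+1) (K-1) - z‖ ^ 2)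
    (hμ : ∀ l : ℕ, ∀ k ∈ Icc 1 K, μ (l+1) k = μ l k + ρ * ⟪C, ζ (l+1) k⟫)
    (hγ : ∀ l : ℕ, ∀ k ∈ Icc 1 (K-1),
      γ (l+1) k = γ l k + ρ • (ζ (l+1) k - ζ (l+1) (k+1)))
    (ζs : EuclideanSpace ℝ (Fin d)) (μs : ℕ → ℝ) (γs : ℕ → EuclideanSpace ℝ (Fin d))
    (hCζs : ⟪C, ζs⟫ = 0)
    (hmin : ∀ z : EuclideanSpace ℝ (Fin d), ⟪C, z⟫ = 0 →
      ∑ k ∈ Icc 1 K, Q k ζs ≤ ∑ k ∈ Icc 1 K, Q k z)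
    (hsaddle : ∀ zf : ℕ → EuclideanSpace ℝ (Fin d),
      (∑ k ∈ Icc 1 K, Q k ζs) + (∑ k ∈ Icc 1 K, μs k * ⟪C, ζs⟫)
          + (∑ k ∈ Icc 1 (K-1), ⟪γs k, ζs - ζs⟫)
        ≤ (∑ k ∈ Icc 1 K, Q k (zf k)) + (∑ k ∈ Icc 1 K, μs k * ⟪C, zf k⟫)
          + (∑ k ∈ Icc 1 (K-1), ⟪γs k, zf k - zf (k+1)⟫))
    :
    ∀ k ∈ Icc 1 K, Tendsto (fun l : ℕ => ⟪C, ζ l k⟫) atTop (nhds 0) := by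
  classical
  have hρ' : ρ ≠ 0 := ne_of_gt hρ
  have hnotOddK : ¬ Odd K := Nat.not_odd_iff_even.mpr hKeven
  -- convexity of the local objectives
  have hQconv : ∀ k ∈ Icc 1 K, ∀ x z : EuclideanSpace ℝ (Fin d), ∀ t : ℝ, 0 ≤ t → t ≤ 1 →
      Q k (x + t • (z - x)) ≤ (1-t) * Q k x + t * Q k z := by
    intro k hk x z t ht0 ht1
    rw [hQ k, hQ k, hQ k]
    have h1 := dsg_sqnorm_convex (y k) ((P k).toEuclideanLin) x z t ht0 ht1
    have h2 := dsg_abs_sum_convex (ω k) (hω k hk) x z t ht0 ht1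
    have hc : (0:ℝ) ≤ 1 / (2 * (n k : ℝ)) := by positivity
    have h3 := mul_le_mul_of_nonneg_left h1 hc
    have h4 := mul_le_mul_of_nonneg_left h2 hlam
    nlinarith [h3, h4]
  -- the Lyapunov function
  set V : ℕ → ℝ := fun m =>
    (1/(2*ρ)) * (∑ k ∈ Icc 1 K, (μ m k - μs k)^2)
    + (1/(2*ρ)) * (∑ k ∈ Icc 1 (K-1), ‖γ m k - γs k‖^2)
    + (ρ/2) * (∑ k ∈ Icc 1 (K-1), ‖ζ m (if Even k then k else k+1) - ζs‖^2) with hV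
  have hVnonneg : ∀ m, 0 ≤ V m := by
    intro m
    have h1 : (0:ℝ) ≤ 1/(2*ρ) := by
      apply le_of_lt; apply one_div_pos.mpr; linarith
    have h2 : (0:ℝ) ≤ ρ/2 := by linarith
    simp only [hV]
    apply add_nonneg
    apply add_nonneg
    · exact mul_nonneg h1 (Finset.sum_nonneg (fun i _ => sq_nonneg _))
    · exact mul_nonneg h1 (Finset.sum_nonneg (fun i _ => sq_nonneg _))
    · exact mul_nonneg h2 (Finset.sum_nonneg (fun i _ => sq_nonneg _))
  -- the key one-step Lyapunov inequality
  have key : ∀ l : ℕ, V (l+1) + (ρ/2) * ∑ k ∈ Icc 1 K, ⟪C, ζ (l+1) k⟫^2 ≤ V l := by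
    intro l
    have hρ2 : (0:ℝ) ≤ ρ/2 := by linarith
    -- Step 1: per-machine variational inequalities
    have hVI : ∀ k ∈ Icc 1 K,
        Q k (ζ (l+1) k) + μ (l+1) k * ⟪C, ζ (l+1) k⟫
          + (if k < K then -⟪γ (l+1) k, ζs - ζ (l+1) k⟫ else 0)
          + (if 1 < k then ⟪γ (l+1) (k-1), ζs - ζ (l+1) k⟫ else 0)
          - (if Odd k then ρ * ⟪ζ (l+1) (k+1) - ζ l (k+1), ζs - ζ (l+1) k⟫
              + (if 1 < k then ρ * ⟪ζ (l+1) (k-1) - ζ l (k-1), ζs - ζ (l+1) k⟫ else 0) else 0)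
        ≤ Q k ζs := by
      intro k hk
      rw [Finset.mem_Icc] at hk
      by_cases hodd : Odd k
      · have hkK : k < K := by
          rcases Nat.lt_or_ge k K with h | h
          · exact h
          · exfalso; have : k = K := by omega
            rw [this] at hodd; exact hnotOddK hodd
        have hmemK : k ∈ Icc 1 K := by rw [Finset.mem_Icc]; omega
        have hmem' : k ∈ Icc 1 (K-1) := by rw [Finset.mem_Icc]; omega
        have hμk := hμ l k hmemK
        have hγk := hγ l k hmem'
        by_cases h1eq : k = 1
        · subst h1eq
          simp only [if_pos hkK, if_neg (lt_irrefl 1), if_pos hodd, add_zero]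
          have hvi : Q 1 (ζ (l+1) 1) ≤ Q 1 ζs +
              ((μ l 1 + ρ * ⟪C, ζ (l+1) 1⟫) * ⟪C, ζs - ζ (l+1) 1⟫ + ⟪γ l 1, ζs - ζ (l+1) 1⟫
                + ρ * ⟪ζ (l+1) 1 - ζ l 2, ζs - ζ (l+1) 1⟫) := by
            refine dsg_vi_of_min (Q 1)
              (fun u => μ l 1 * ⟪C, u⟫ + (ρ/2) * ⟪C, u⟫^2 + ⟪γ l 1, u - ζ l 2⟫
                + (ρ/2) * ‖u - ζ l 2‖^2)
              (ζ (l+1) 1) ζs _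
              ((ρ/2) * ⟪C, ζs - ζ (l+1) 1⟫^2 + (ρ/2) * ‖ζs - ζ (l+1) 1‖^2)
              (hQconv 1 hmemK _ _) ?_ ?_ ?_
            · intro t
              rw [add_sub_right_comm]
              simp only [inner_add_right, real_inner_smul_right, dsg_expand_norm_add]
              ring
            · exact add_nonneg (mul_nonneg hρ2 (sq_nonneg _)) (mul_nonneg hρ2 (sq_nonneg _))
            · intro u
              linarith [hdyn1 l u]
          have e1 : ⟪C, ζs - ζ (l+1) 1⟫ = -⟪C, ζ (l+1) 1⟫ := by
            rw [inner_sub_right, hCζs]; ring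
          have e3 : ⟪ζ (l+1) 1 - ζ l 2, ζs - ζ (l+1) 1⟫
              = ⟪ζ (l+1) 1 - ζ (l+1) 2, ζs - ζ (l+1) 1⟫
                + ⟪ζ (l+1) 2 - ζ l 2, ζs - ζ (l+1) 1⟫ := by
            rw [← inner_add_left]; congr 1; abel
          have e2 : ⟪γ (l+1) 1, ζs - ζ (l+1) 1⟫ = ⟪γ l 1, ζs - ζ (l+1) 1⟫
              + ρ * ⟪ζ (l+1) 1 - ζ (l+1) 2, ζs - ζ (l+1) 1⟫ := by
            rw [hγk, inner_add_left, real_inner_smul_left]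
          rw [e1, e3] at hvi
          rw [hμk, e2]
          linarith [hvi]
        · -- odd middle machine
          have h1k : 1 < k := by omega
          have hmem'' : k - 1 ∈ Icc 1 (K-1) := by rw [Finset.mem_Icc]; omega
          have hγk' := hγ l (k-1) hmem''
          have hkm : k - 1 + 1 = k := by omega
          rw [hkm] at hγk'
          simp only [if_pos hkK, if_pos h1k, if_pos hodd]
          have hvi : Q k (ζ (l+1) k) ≤ Q k ζs +
              ((μ l k + ρ * ⟪C, ζ (l+1) k⟫) * ⟪C, ζs - ζ (l+1) k⟫
                - ⟪γ l (k-1), ζs - ζ (l+1) k⟫ + ⟪γ l k, ζs - ζ (l+1) k⟫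
                - ρ * ⟪ζ l (k-1) - ζ (l+1) k, ζs - ζ (l+1) k⟫
                + ρ * ⟪ζ (l+1) k - ζ l (k+1), ζs - ζ (l+1) k⟫) := by
            refine dsg_vi_of_min (Q k)
              (fun u => μ l k * ⟪C, u⟫ + (ρ/2) * ⟪C, u⟫^2 + ⟪γ l (k-1), ζ l (k-1) - u⟫
                + ⟪γ l k, u - ζ l (k+1)⟫ + (ρ/2) * ‖ζ l (k-1) - u‖^2
                + (ρ/2) * ‖u - ζ l (k+1)‖^2)
              (ζ (l+1) k) ζs _
              ((ρ/2) * ⟪C, ζs - ζ (l+1) k⟫^2 + ρ * ‖ζs - ζ (l+1) k‖^2)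
              (hQconv k hmemK _ _) ?_ ?_ ?_
            · intro t
              rw [add_sub_right_comm, sub_add_eq_sub_sub]
              simp only [inner_add_right, inner_sub_right, real_inner_smul_right,
                dsg_expand_norm_add, dsg_expand_norm_sub]
              ring
            · have : (0:ℝ) ≤ ρ := by linarith
              exact add_nonneg (mul_nonneg hρ2 (sq_nonneg _)) (mul_nonneg this (sq_nonneg _))
            · intro u
              linarith [hdynodd l k hodd h1k hkK u]
          have e1 : ⟪C, ζs - ζ (l+1) k⟫ = -⟪C, ζ (l+1) k⟫ := by
            rw [inner_sub_right, hCζs]; ring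
          have e3a : ⟪ζ (l+1) k - ζ l (k+1), ζs - ζ (l+1) k⟫
              = ⟪ζ (l+1) k - ζ (l+1) (k+1), ζs - ζ (l+1) k⟫
                + ⟪ζ (l+1) (k+1) - ζ l (k+1), ζs - ζ (l+1) k⟫ := by
            rw [← inner_add_left]; congr 1; abel
          have e3b : ⟪ζ l (k-1) - ζ (l+1) k, ζs - ζ (l+1) k⟫
              = ⟪ζ (l+1) (k-1) - ζ (l+1) k, ζs - ζ (l+1) k⟫
                - ⟪ζ (l+1) (k-1) - ζ l (k-1), ζs - ζ (l+1) k⟫ := by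
            rw [← inner_sub_left]; congr 1; abel
          have e2a : ⟪γ (l+1) k, ζs - ζ (l+1) k⟫ = ⟪γ l k, ζs - ζ (l+1) k⟫
              + ρ * ⟪ζ (l+1) k - ζ (l+1) (k+1), ζs - ζ (l+1) k⟫ := by
            rw [hγk, inner_add_left, real_inner_smul_left]
          have e2b : ⟪γ (l+1) (k-1), ζs - ζ (l+1) k⟫ = ⟪γ l (k-1), ζs - ζ (l+1) k⟫
              + ρ * ⟪ζ (l+1) (k-1) - ζ (l+1) k, ζs - ζ (l+1) k⟫ := by
            rw [hγk', inner_add_left, real_inner_smul_left]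
          rw [e1, e3a, e3b] at hvi
          rw [hμk, e2a, e2b]
          linarith [hvi]
      · -- even machines
        have heven : Even k := Nat.not_odd_iff_even.mp hodd
        have h1k : 1 < k := by
          rcases Nat.lt_or_ge 1 k with h | h
          · exact h
          · exfalso; have : k = 1 := by omega
            rw [this] at heven; exact (Nat.not_odd_iff_even.mpr heven) ⟨0, rfl⟩
        by_cases hKeq : k = K
        · rw [hKeq]
          have h1K : 1 < K := by omega
          have hmemK : K ∈ Icc 1 K := by rw [Finset.mem_Icc]; omega
          have hμk := hμ l K hmemK
          have hmem'' : K - 1 ∈ Icc 1 (K-1) := by rw [Finset.mem_Icc]; omega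
          have hγk' := hγ l (K-1) hmem''
          have hkm : K - 1 + 1 = K := by omega
          rw [hkm] at hγk'
          simp only [if_neg (lt_irrefl K), if_pos h1K, if_neg hnotOddK, add_zero, sub_zero]
          have hvi : Q K (ζ (l+1) K) ≤ Q K ζs +
              ((μ l K + ρ * ⟪C, ζ (l+1) K⟫) * ⟪C, ζs - ζ (l+1) K⟫
                - ⟪γ l (K-1), ζs - ζ (l+1) K⟫
                - ρ * ⟪ζ (l+1) (K-1) - ζ (l+1) K, ζs - ζ (l+1) K⟫) := by
            refine dsg_vi_of_min (Q K)
              (fun u => μ l K * ⟪C, u⟫ + (ρ/2) * ⟪C, u⟫^2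
                + ⟪γ l (K-1), ζ (l+1) (K-1) - u⟫ + (ρ/2) * ‖ζ (l+1) (K-1) - u‖^2)
              (ζ (l+1) K) ζs _
              ((ρ/2) * ⟪C, ζs - ζ (l+1) K⟫^2 + (ρ/2) * ‖ζs - ζ (l+1) K‖^2)
              (hQconv K hmemK _ _) ?_ ?_ ?_
            · intro t
              rw [sub_add_eq_sub_sub]
              simp only [inner_add_right, inner_sub_right, real_inner_smul_right,
                dsg_expand_norm_sub]
              ring
            · exact add_nonneg (mul_nonneg hρ2 (sq_nonneg _)) (mul_nonneg hρ2 (sq_nonneg _))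
            · intro u
              linarith [hdynK l u]
          have e1 : ⟪C, ζs - ζ (l+1) K⟫ = -⟪C, ζ (l+1) K⟫ := by
            rw [inner_sub_right, hCζs]; ring
          have e2b : ⟪γ (l+1) (K-1), ζs - ζ (l+1) K⟫ = ⟪γ l (K-1), ζs - ζ (l+1) K⟫
              + ρ * ⟪ζ (l+1) (K-1) - ζ (l+1) K, ζs - ζ (l+1) K⟫ := by
            rw [hγk', inner_add_left, real_inner_smul_left]
          rw [e1] at hvi
          rw [hμk, e2b]
          linarith [hvi]
        · -- even middle machine
          have hkK : k < K := by omega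
          have hmemK : k ∈ Icc 1 K := by rw [Finset.mem_Icc]; omega
          have hμk := hμ l k hmemK
          have hmem'' : k - 1 ∈ Icc 1 (K-1) := by rw [Finset.mem_Icc]; omega
          have hγk' := hγ l (k-1) hmem''
          have hkm : k - 1 + 1 = k := by omega
          rw [hkm] at hγk'
          have hmem' : k ∈ Icc 1 (K-1) := by rw [Finset.mem_Icc]; omega
          have hγk := hγ l k hmem'
          have h0k : 0 < k := by omega
          simp only [if_pos hkK, if_pos h1k, if_neg hodd, add_zero, sub_zero]
          have hvi : Q k (ζ (l+1) k) ≤ Q k ζs +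
              ((μ l k + ρ * ⟪C, ζ (l+1) k⟫) * ⟪C, ζs - ζ (l+1) k⟫
                - ⟪γ l (k-1), ζs - ζ (l+1) k⟫ + ⟪γ l k, ζs - ζ (l+1) k⟫
                - ρ * ⟪ζ (l+1) (k-1) - ζ (l+1) k, ζs - ζ (l+1) k⟫
                + ρ * ⟪ζ (l+1) k - ζ (l+1) (k+1), ζs - ζ (l+1) k⟫) := by
            refine dsg_vi_of_min (Q k)
              (fun u => μ l k * ⟪C, u⟫ + (ρ/2) * ⟪C, u⟫^2
                + ⟪γ l (k-1), ζ (l+1) (k-1) - u⟫ + ⟪γ l k, u - ζ (l+1) (k+1)⟫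
                + (ρ/2) * ‖ζ (l+1) (k-1) - u‖^2 + (ρ/2) * ‖u - ζ (l+1) (k+1)‖^2)
              (ζ (l+1) k) ζs _
              ((ρ/2) * ⟪C, ζs - ζ (l+1) k⟫^2 + ρ * ‖ζs - ζ (l+1) k‖^2)
              (hQconv k hmemK _ _) ?_ ?_ ?_
            · intro t
              rw [add_sub_right_comm, sub_add_eq_sub_sub]
              simp only [inner_add_right, inner_sub_right, real_inner_smul_right,
                dsg_expand_norm_add, dsg_expand_norm_sub]
              ring
            · have : (0:ℝ) ≤ ρ := by linarith
              exact add_nonneg (mul_nonneg hρ2 (sq_nonneg _)) (mul_nonneg this (sq_nonneg _))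
            · intro u
              linarith [hdyneven l k heven h0k hkK u]
          have e1 : ⟪C, ζs - ζ (l+1) k⟫ = -⟪C, ζ (l+1) k⟫ := by
            rw [inner_sub_right, hCζs]; ring
          have e2a : ⟪γ (l+1) k, ζs - ζ (l+1) k⟫ = ⟪γ l k, ζs - ζ (l+1) k⟫
              + ρ * ⟪ζ (l+1) k - ζ (l+1) (k+1), ζs - ζ (l+1) k⟫ := by
            rw [hγk, inner_add_left, real_inner_smul_left]
          have e2b : ⟪γ (l+1) (k-1), ζs - ζ (l+1) k⟫ = ⟪γ l (k-1), ζs - ζ (l+1) k⟫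
              + ρ * ⟪ζ (l+1) (k-1) - ζ (l+1) k, ζs - ζ (l+1) k⟫ := by
            rw [hγk', inner_add_left, real_inner_smul_left]
          rw [e1] at hvi
          rw [hμk, e2a, e2b]
          linarith [hvi]
    -- Step 2: sum the VIs
    have hsum1 := Finset.sum_le_sum hVI
    rw [Finset.sum_sub_distrib, Finset.sum_add_distrib, Finset.sum_add_distrib,
      Finset.sum_add_distrib] at hsum1
    -- Step 3: saddle point inequality at the current iterate
    have hsad := hsaddle (ζ (l+1))
    simp only [hCζs, mul_zero, Finset.sum_const_zero, add_zero, sub_self,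
      inner_zero_right] at hsad
    -- Step 4: combine the two γ-sums into an edge sum
    have hA : ∑ k ∈ Icc 1 K, (if k < K then -⟪γ (l+1) k, ζs - ζ (l+1) k⟫ else 0)
        = ∑ k ∈ Icc 1 (K-1), -⟪γ (l+1) k, ζs - ζ (l+1) k⟫ := by
      rw [dsg_sum_top _ hK, if_neg (lt_irrefl K), add_zero]
      refine Finset.sum_congr rfl (fun k hk => ?_)
      rw [Finset.mem_Icc] at hk
      rw [if_pos (by omega : k < K)]
    have hB : ∑ k ∈ Icc 1 K, (if 1 < k then ⟪γ (l+1) (k-1), ζs - ζ (l+1) k⟫ else 0)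
        = ∑ k ∈ Icc 1 (K-1), ⟪γ (l+1) k, ζs - ζ (l+1) (k+1)⟫ := by
      rw [dsg_sum_bot _ hK, if_neg (lt_irrefl 1), zero_add]
      refine Finset.sum_congr rfl (fun k hk => ?_)
      rw [Finset.mem_Icc] at hk
      rw [if_pos (by omega : 1 < k + 1)]
      norm_num
    have hAB : (∑ k ∈ Icc 1 K, (if k < K then -⟪γ (l+1) k, ζs - ζ (l+1) k⟫ else 0))
          + (∑ k ∈ Icc 1 K, (if 1 < k then ⟪γ (l+1) (k-1), ζs - ζ (l+1) k⟫ else 0))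
        = ∑ k ∈ Icc 1 (K-1), ⟪γ (l+1) k, ζ (l+1) k - ζ (l+1) (k+1)⟫ := by
      rw [hA, hB, ← Finset.sum_add_distrib]
      refine Finset.sum_congr rfl (fun k _ => ?_)
      have hd1 : ζ (l+1) k - ζ (l+1) (k+1)
          = (ζs - ζ (l+1) (k+1)) - (ζs - ζ (l+1) k) := by abel
      rw [hd1]
      simp only [inner_sub_right]
      ring
    -- Step 5: rewrite the coupling (e-term) sum as an edge sum and bound it
    have hEsplit : ∑ k ∈ Icc 1 K,
          (if Odd k then ρ * ⟪ζ (l+1) (k+1) - ζ l (k+1), ζs - ζ (l+1) k⟫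
            + (if 1 < k then ρ * ⟪ζ (l+1) (k-1) - ζ l (k-1), ζs - ζ (l+1) k⟫ else 0) else 0)
        = (∑ k ∈ Icc 1 K, (if Odd k then ρ * ⟪ζ (l+1) (k+1) - ζ l (k+1), ζs - ζ (l+1) k⟫ else 0))
          + ∑ k ∈ Icc 1 K, (if Odd k ∧ 1 < k
              then ρ * ⟪ζ (l+1) (k-1) - ζ l (k-1), ζs - ζ (l+1) k⟫ else 0) := by
      rw [← Finset.sum_add_distrib]
      refine Finset.sum_congr rfl (fun k _ => ?_)
      by_cases h : Odd k
      · rw [if_pos h, if_pos h]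
        by_cases h2 : 1 < k
        · rw [if_pos h2, if_pos ⟨h, h2⟩]
        · rw [if_neg h2, if_neg (fun hc => h2 hc.2), add_zero]
      · rw [if_neg h, if_neg h, if_neg (fun hc => h hc.1), add_zero]
    have hE1 : ∑ k ∈ Icc 1 K, (if Odd k then ρ * ⟪ζ (l+1) (k+1) - ζ l (k+1), ζs - ζ (l+1) k⟫ else 0)
        = ∑ k ∈ Icc 1 (K-1), (if Odd k then ρ * ⟪ζ (l+1) (k+1) - ζ l (k+1), ζs - ζ (l+1) k⟫ else 0) := by
      rw [dsg_sum_top _ hK, if_neg hnotOddK, add_zero]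
    have hE2 : ∑ k ∈ Icc 1 K, (if Odd k ∧ 1 < k
          then ρ * ⟪ζ (l+1) (k-1) - ζ l (k-1), ζs - ζ (l+1) k⟫ else 0)
        = ∑ k ∈ Icc 1 (K-1), (if ¬ Odd k
            then ρ * ⟪ζ (l+1) k - ζ l k, ζs - ζ (l+1) (k+1)⟫ else 0) := by
      rw [dsg_sum_bot _ hK, if_neg (by simp : ¬ (Odd 1 ∧ 1 < 1)), zero_add]
      refine Finset.sum_congr rfl (fun k hk => ?_)
      rw [Finset.mem_Icc] at hk
      by_cases h : Odd k
      · rw [if_neg (fun hc => (Nat.odd_add_one.mp hc.1) h),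
          if_neg (not_not_intro h)]
      · rw [if_pos ⟨Nat.odd_add_one.mpr h, by omega⟩, if_pos h]
        norm_num
    have hedge : ∀ k ∈ Icc 1 (K-1),
        (if Odd k then ρ * ⟪ζ (l+1) (k+1) - ζ l (k+1), ζs - ζ (l+1) k⟫ else 0)
          + (if ¬ Odd k then ρ * ⟪ζ (l+1) k - ζ l k, ζs - ζ (l+1) (k+1)⟫ else 0)
        ≤ ρ/2 * ‖ζ (l+1) k - ζ (l+1) (k+1)‖^2
          + ρ/2 * (‖ζ l (if Even k then k else k+1) - ζs‖^2
              - ‖ζ (l+1) (if Even k then k else k+1) - ζs‖^2) := by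
      intro k _
      by_cases h : Odd k
      · have hne : ¬ Even k := Nat.not_even_iff_odd.mpr h
        rw [if_pos h, if_neg (not_not_intro h), add_zero, if_neg hne]
        exact dsg_inner_cross_bound (ζ (l+1) (k+1)) (ζ l (k+1)) ζs (ζ (l+1) k) hρ
      · have he : Even k := Nat.not_odd_iff_even.mp h
        rw [if_neg h, if_pos h, zero_add, if_pos he]
        have h2 := dsg_inner_cross_bound (ζ (l+1) k) (ζ l k) ζs (ζ (l+1) (k+1)) hρ
        rw [norm_sub_rev (ζ (l+1) (k+1)) (ζ (l+1) k)] at h2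
        exact h2
    have hEbound : ∑ k ∈ Icc 1 K,
          (if Odd k then ρ * ⟪ζ (l+1) (k+1) - ζ l (k+1), ζs - ζ (l+1) k⟫
            + (if 1 < k then ρ * ⟪ζ (l+1) (k-1) - ζ l (k-1), ζs - ζ (l+1) k⟫ else 0) else 0)
        ≤ ρ/2 * (∑ k ∈ Icc 1 (K-1), ‖ζ (l+1) k - ζ (l+1) (k+1)‖^2)
          + ρ/2 * ((∑ k ∈ Icc 1 (K-1), ‖ζ l (if Even k then k else k+1) - ζs‖^2)
              - ∑ k ∈ Icc 1 (K-1), ‖ζ (l+1) (if Even k then k else k+1) - ζs‖^2) := by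
      rw [hEsplit, hE1, hE2, ← Finset.sum_add_distrib]
      calc ∑ k ∈ Icc 1 (K-1), ((if Odd k then ρ * ⟪ζ (l+1) (k+1) - ζ l (k+1), ζs - ζ (l+1) k⟫ else 0)
            + (if ¬ Odd k then ρ * ⟪ζ (l+1) k - ζ l k, ζs - ζ (l+1) (k+1)⟫ else 0))
          ≤ ∑ k ∈ Icc 1 (K-1), (ρ/2 * ‖ζ (l+1) k - ζ (l+1) (k+1)‖^2
            + ρ/2 * (‖ζ l (if Even k then k else k+1) - ζs‖^2
              - ‖ζ (l+1) (if Even k then k else k+1) - ζs‖^2)) := Finset.sum_le_sum hedge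
        _ = _ := by
          rw [Finset.sum_add_distrib, ← Finset.mul_sum, ← Finset.mul_sum,
            Finset.sum_sub_distrib]
    -- Step 6: dual-update identities
    have hμsum : (∑ k ∈ Icc 1 K, μ (l+1) k * ⟪C, ζ (l+1) k⟫)
          - ∑ k ∈ Icc 1 K, μs k * ⟪C, ζ (l+1) k⟫
        = (1/(2*ρ)) * ((∑ k ∈ Icc 1 K, (μ (l+1) k - μs k)^2)
            - ∑ k ∈ Icc 1 K, (μ l k - μs k)^2)
          + (ρ/2) * ∑ k ∈ Icc 1 K, ⟪C, ζ (l+1) k⟫^2 := by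
      rw [← Finset.sum_sub_distrib]
      have hpt : ∀ k ∈ Icc 1 K, μ (l+1) k * ⟪C, ζ (l+1) k⟫ - μs k * ⟪C, ζ (l+1) k⟫
          = (1/(2*ρ)) * ((μ (l+1) k - μs k)^2 - (μ l k - μs k)^2)
            + (ρ/2) * ⟪C, ζ (l+1) k⟫^2 := by
        intro k hk
        rw [hμ l k hk]
        field_simp
        ring
      rw [Finset.sum_congr rfl hpt, Finset.sum_add_distrib, ← Finset.mul_sum,
        ← Finset.mul_sum, Finset.sum_sub_distrib]
    have hγsum : (∑ k ∈ Icc 1 (K-1), ⟪γ (l+1) k, ζ (l+1) k - ζ (l+1) (k+1)⟫)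
          - ∑ k ∈ Icc 1 (K-1), ⟪γs k, ζ (l+1) k - ζ (l+1) (k+1)⟫
        = (1/(2*ρ)) * ((∑ k ∈ Icc 1 (K-1), ‖γ (l+1) k - γs k‖^2)
            - ∑ k ∈ Icc 1 (K-1), ‖γ l k - γs k‖^2)
          + (ρ/2) * ∑ k ∈ Icc 1 (K-1), ‖ζ (l+1) k - ζ (l+1) (k+1)‖^2 := by
      rw [← Finset.sum_sub_distrib]
      have hpt : ∀ k ∈ Icc 1 (K-1), ⟪γ (l+1) k, ζ (l+1) k - ζ (l+1) (k+1)⟫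
            - ⟪γs k, ζ (l+1) k - ζ (l+1) (k+1)⟫
          = (1/(2*ρ)) * (‖γ (l+1) k - γs k‖^2 - ‖γ l k - γs k‖^2)
            + (ρ/2) * ‖ζ (l+1) k - ζ (l+1) (k+1)‖^2 := by
        intro k hk
        have hsub : γ l k - γs k = (γ (l+1) k - γs k)
            - ρ • (ζ (l+1) k - ζ (l+1) (k+1)) := by
          rw [hγ l k hk]; abel
        have h2 : ‖γ l k - γs k‖^2 = ‖γ (l+1) k - γs k‖^2
            - ρ * (2 * ⟪γ (l+1) k - γs k, ζ (l+1) k - ζ (l+1) (k+1)⟫)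
            + ρ^2 * ‖ζ (l+1) k - ζ (l+1) (k+1)‖^2 := by
          rw [hsub, dsg_expand_norm_sub]
        have h3 : ⟪γ (l+1) k, ζ (l+1) k - ζ (l+1) (k+1)⟫ - ⟪γs k, ζ (l+1) k - ζ (l+1) (k+1)⟫
            = ⟪γ (l+1) k - γs k, ζ (l+1) k - ζ (l+1) (k+1)⟫ := (inner_sub_left _ _ _).symm
        rw [h3, h2]
        field_simp
        ring
      rw [Finset.sum_congr rfl hpt, Finset.sum_add_distrib, ← Finset.mul_sum,
        ← Finset.mul_sum, Finset.sum_sub_distrib]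
    -- Step 7: assemble
    simp only [hV]
    linarith [hsum1, hsad, hEbound, hμsum, hγsum, hAB]
  -- From the key inequality to convergence
  intro k hk
  have hterm : ∀ l : ℕ, (ρ/2) * ⟪C, ζ (l+1) k⟫^2 ≤ V l - V (l+1) := by
    intro l
    have h1 := key l
    have h2 : ⟪C, ζ (l+1) k⟫^2 ≤ ∑ k' ∈ Icc 1 K, ⟪C, ζ (l+1) k'⟫^2 :=
      Finset.single_le_sum (f := fun k' => ⟪C, ζ (l+1) k'⟫^2) (fun i _ => sq_nonneg _) hk
    nlinarith [h1, h2]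
  have hbound : ∀ N : ℕ, ∑ l ∈ range N, ⟪C, ζ (l+1) k⟫^2 ≤ (2/ρ) * V 0 := by
    intro N
    have h1 : ∑ l ∈ range N, (ρ/2) * ⟪C, ζ (l+1) k⟫^2 ≤ ∑ l ∈ range N, (V l - V (l+1)) :=
      Finset.sum_le_sum (fun l _ => hterm l)
    rw [Finset.sum_range_sub' V N, ← Finset.mul_sum] at h1
    have h2 := h1.trans (by linarith [hVnonneg N] : V 0 - V N ≤ V 0)
    have h3 : (0:ℝ) < ρ/2 := by linarith
    rw [← le_div_iff₀' h3] at h2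
    calc ∑ l ∈ range N, ⟪C, ζ (l+1) k⟫^2 ≤ V 0 / (ρ/2) := h2
      _ = (2/ρ) * V 0 := by field_simp
  have hsumm : Summable (fun l => ⟪C, ζ (l+1) k⟫^2) :=
    summable_of_sum_range_le (fun l => sq_nonneg _) hbound
  have htend2 : Tendsto (fun l => ⟪C, ζ (l+1) k⟫^2) atTop (nhds 0) :=
    hsumm.tendsto_atTop_zero
  have habs : Tendsto (fun l => |⟪C, ζ (l+1) k⟫|) atTop (nhds 0) := by
    have hc : Tendsto (fun l => Real.sqrt (⟪C, ζ (l+1) k⟫^2)) atTop (nhds (Real.sqrt 0)) :=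
      (Real.continuous_sqrt.tendsto 0).comp htend2
    simpa [Real.sqrt_sq_eq_abs, Real.sqrt_zero] using hc
  have hshift : Tendsto (fun l => ⟪C, ζ (l+1) k⟫) atTop (nhds 0) := by
    have hneg : Tendsto (fun l => -|⟪C, ζ (l+1) k⟫|) atTop (nhds 0) := by
      simpa using habs.neg
    exact tendsto_of_tendsto_of_tendsto_of_le_of_le hneg habs
      (fun l => neg_abs_le _) (fun l => le_abs_self _)
  exact (tendsto_add_atTop_iff_nat 1).mp hshift
end
end

section
/- (Theorem 1, part 2.) Under the DSGCDMM dynamics and the existence of a saddle point, the primal residual of the consensus constraint converges to zero: for every k = 1,…,K−1, r_k^l = ζ_k^l − ζ_{k+1}^l → 0 in ℝ^d as l → ∞. -/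
open Finset Filter
open scoped RealInnerProductSpace

noncomputable section
set_option maxHeartbeats 2000000

section Helpers
variable {E : Type*} [NormedAddCommGroup E] [InnerProductSpace ℝ E]

lemma master_VI {E : Type*} [NormedAddCommGroup E] [InnerProductSpace ℝ E]
    (F : E → ℝ) (hF : ConvexOn ℝ Set.univ F)
    (ρ : ℝ) (hρ : 0 < ρ) (C x : E) (α : ℝ)
    (g₁ a₁ g₂ a₂ : E) (c₁ c₂ : ℝ) (hc₁ : 0 ≤ c₁) (hc₂ : 0 ≤ c₂)
    (hmin : ∀ z : E, F x + α * ⟪C,x⟫ + (ρ/2) * ⟪C,x⟫^2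
        + ⟪g₁, a₁ - x⟫ + ⟪g₂, x - a₂⟫ + (ρ/2)*c₁*‖a₁ - x‖^2 + (ρ/2)*c₂*‖x - a₂‖^2
      ≤ F z + α * ⟪C,z⟫ + (ρ/2) * ⟪C,z⟫^2
        + ⟪g₁, a₁ - z⟫ + ⟪g₂, z - a₂⟫ + (ρ/2)*c₁*‖a₁ - z‖^2 + (ρ/2)*c₂*‖z - a₂‖^2) :
    ∀ z : E, F x + ⟪(α + ρ*⟪C,x⟫) • C - g₁ + g₂ + (ρ*c₁) • (x - a₁) + (ρ*c₂) • (x - a₂), x - z⟫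
      ≤ F z := by
  intro z
  set D := z - x with hD
  set G : E := (α + ρ*⟪C,x⟫) • C - g₁ + g₂ + (ρ*c₁) • (x - a₁) + (ρ*c₂) • (x - a₂) with hG
  set R : ℝ := (ρ/2)*⟪C,D⟫^2 + (ρ/2)*(c₁+c₂)*‖D‖^2 with hR
  have hRnn : 0 ≤ R := by
    have h2 : (0:ℝ) ≤ ρ/2 := by linarith
    rw [hR]; positivity
  have hGD : ⟪G, D⟫ = (α + ρ*⟪C,x⟫)*⟪C,D⟫ - ⟪g₁,D⟫ + ⟪g₂,D⟫
      - (ρ*c₁)*⟪a₁-x,D⟫ + (ρ*c₂)*⟪x-a₂,D⟫ := by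
    have hia : (⟪x-a₁,D⟫:ℝ) = -⟪a₁-x,D⟫ := by
      rw [← inner_neg_left]; congr 1; abel
    rw [hG]
    simp only [inner_add_left, inner_sub_left, real_inner_smul_left, hia]
    ring
  have key : ∀ t : ℝ, 0 < t → t ≤ 1 → F x - F z - ⟪G, D⟫ ≤ t * R := by
    intro t ht ht1
    have e1 : ⟪C, x + t•D⟫ = ⟪C,x⟫ + t*⟪C,D⟫ := by
      rw [inner_add_right, real_inner_smul_right]
    have e2 : ⟪g₁, a₁ - (x + t•D)⟫ = ⟪g₁, a₁-x⟫ - t*⟪g₁,D⟫ := by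
      have h : a₁ - (x + t•D) = (a₁ - x) - t•D := by abel
      rw [h, inner_sub_right, real_inner_smul_right]
    have e3 : ⟪g₂, (x + t•D) - a₂⟫ = ⟪g₂, x-a₂⟫ + t*⟪g₂,D⟫ := by
      have h : (x + t•D) - a₂ = (x - a₂) + t•D := by abel
      rw [h, inner_add_right, real_inner_smul_right]
    have e4 : ‖a₁ - (x + t•D)‖^2 = ‖a₁-x‖^2 - 2*t*⟪a₁-x,D⟫ + t^2*‖D‖^2 := by
      have h : a₁ - (x + t•D) = (a₁ - x) - t•D := by abel
      rw [h, norm_sub_sq_real, real_inner_smul_right, norm_smul, Real.norm_eq_abs]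
      rcases abs_cases t with ⟨h1,_⟩|⟨h1,_⟩ <;> rw [h1] <;> ring
    have e5 : ‖(x + t•D) - a₂‖^2 = ‖x-a₂‖^2 + 2*t*⟪x-a₂,D⟫ + t^2*‖D‖^2 := by
      have h : (x + t•D) - a₂ = (x - a₂) + t•D := by abel
      rw [h, norm_add_sq_real, real_inner_smul_right, norm_smul, Real.norm_eq_abs]
      rcases abs_cases t with ⟨h1,_⟩|⟨h1,_⟩ <;> rw [h1] <;> ring
    have hcv : F (x + t•D) ≤ (1-t)*F x + t*F z := by
      have hx : x + t•D = (1-t)•x + t•z := by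
        rw [hD, smul_sub, sub_smul, one_smul]; abel
      rw [hx]
      have := hF.2 (Set.mem_univ x) (Set.mem_univ z) (by linarith : (0:ℝ) ≤ 1 - t)
        (le_of_lt ht) (by ring)
      simpa using this
    have hm := hmin (x + t•D)
    rw [e1, e2, e3, e4, e5] at hm
    have goal2 : 0 ≤ t * ((F z - F x + ⟪G,D⟫) + t * R) := by
      rw [hGD, hR]
      nlinarith [hm, hcv]
    have h3 : (0:ℝ) ≤ (F z - F x + ⟪G,D⟫) + t * R := by
      have := le_of_mul_le_mul_left (by linarith : t*0 ≤ t*((F z - F x + ⟪G,D⟫) + t * R)) ht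
      linarith
    linarith
  have hseq : ∀ n : ℕ, F x - F z - ⟪G, D⟫ ≤ (1/((n:ℝ)+1)) * R := by
    intro n
    refine key _ (by positivity) ?_
    rw [div_le_one (by positivity)]
    linarith [Nat.cast_nonneg (α := ℝ) n]
  have hlim : Tendsto (fun n : ℕ => (1/((n:ℝ)+1)) * R) atTop (nhds 0) := by
    have h := tendsto_one_div_add_atTop_nhds_zero_nat.mul_const R
    rw [zero_mul] at h
    exact h
  have hfin : F x - F z - ⟪G, D⟫ ≤ 0 := ge_of_tendsto hlim (Eventually.of_forall hseq)
  have : ⟪G, x - z⟫ = -⟪G, D⟫ := by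
    rw [← inner_neg_right]; congr 1; rw [hD]; abel
  rw [this]; linarith


lemma convex_sq_norm_affine {n d : ℕ} (y : EuclideanSpace ℝ (Fin n))
    (L : EuclideanSpace ℝ (Fin d) →ₗ[ℝ] EuclideanSpace ℝ (Fin n)) :
    ConvexOn ℝ Set.univ (fun x => ‖y - L x‖^2) := by
  refine ⟨convex_univ, ?_⟩
  intro x _ z _ a b ha hb hab
  have hy : y = a • y + b • y := by rw [← add_smul, hab, one_smul]
  have hsplit : y - L (a•x + b•z) = a•(y - L x) + b•(y - L z) := by
    rw [map_add, map_smul, map_smul, smul_sub, smul_sub]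
    nth_rewrite 1 [hy]
    abel
  simp only [smul_eq_mul]
  rw [hsplit]
  have htri : ‖a•(y - L x) + b•(y - L z)‖ ≤ a*‖y - L x‖ + b*‖y - L z‖ := by
    refine le_trans (norm_add_le _ _) ?_
    rw [norm_smul, norm_smul, Real.norm_eq_abs, Real.norm_eq_abs,
      abs_of_nonneg ha, abs_of_nonneg hb]
  have h0 := norm_nonneg (a•(y - L x) + b•(y - L z))
  nlinarith [mul_nonneg (mul_nonneg ha hb) (sq_nonneg (‖y - L x‖ - ‖y - L z‖)),
    norm_nonneg (y - L x), norm_nonneg (y - L z)]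

lemma convex_wabs {d : ℕ} (ω : Fin d → ℝ) (hω : ∀ j, 0 ≤ ω j) :
    ConvexOn ℝ Set.univ (fun x : EuclideanSpace ℝ (Fin d) => ∑ j, ω j * |x j|) := by
  refine ⟨convex_univ, ?_⟩
  intro x _ z _ a b ha hb hab
  simp only [smul_eq_mul, Finset.mul_sum, ← Finset.sum_add_distrib]
  refine Finset.sum_le_sum fun j _ => ?_
  have hx : (a•x + b•z) j = a * x j + b * z j := by
    simp [PiLp.add_apply, PiLp.smul_apply, smul_eq_mul]
  rw [hx]
  have habs : |a * x j + b * z j| ≤ a * |x j| + b * |z j| := by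
    refine le_trans (abs_add_le _ _) ?_
    rw [abs_mul, abs_mul, abs_of_nonneg ha, abs_of_nonneg hb]
  nlinarith [hω j, abs_nonneg (x j), abs_nonneg (z j)]

lemma convexQ {n d : ℕ} (y : EuclideanSpace ℝ (Fin n))
    (L : EuclideanSpace ℝ (Fin d) →ₗ[ℝ] EuclideanSpace ℝ (Fin n))
    (c lam : ℝ) (hc : 0 ≤ c) (hlam : 0 ≤ lam) (ω : Fin d → ℝ) (hω : ∀ j, 0 ≤ ω j) :
    ConvexOn ℝ Set.univ
      (fun x : EuclideanSpace ℝ (Fin d) => c * ‖y - L x‖^2 + lam * ∑ j, ω j * |x j|) := by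
  have h1 := (convex_sq_norm_affine y L).smul hc
  have h2 := (convex_wabs ω hω).smul hlam
  have := h1.add h2
  exact this


variable {E : Type*} [NormedAddCommGroup E] [InnerProductSpace ℝ E]

lemma inner_diff_id (x w z : E) :
    ⟪x - w, x - z⟫ = (‖x - z‖^2 - ‖w - z‖^2 + ‖x - w‖^2) / 2 := by
  have h := norm_sub_sq_real (x - w) (x - z)
  have h2 : (x - w) - (x - z) = z - w := by abel
  rw [h2, norm_sub_rev z w] at h
  linarith

lemma ga_id2 (ρ : ℝ) (g0 gs r : E) :
    2*ρ*⟪(g0 + ρ • r) - gs, r⟫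
      = ‖(g0 + ρ • r) - gs‖^2 - ‖g0 - gs‖^2 + ρ^2 * ‖r‖^2 := by
  have hh : (g0 + ρ•r) - gs = (g0 - gs) + ρ•r := by abel
  rw [hh, norm_add_sq_real, inner_add_left, real_inner_smul_left,
    real_inner_smul_right, norm_smul, real_inner_self_eq_norm_sq, Real.norm_eq_abs]
  rcases abs_cases ρ with ⟨h1,_⟩|⟨h1,_⟩ <;> rw [h1] <;> ring

lemma mu_id2 (ρ s m0 ms : ℝ) :
    2*ρ*(((m0 + ρ*s) - ms)*s) = ((m0 + ρ*s) - ms)^2 - (m0-ms)^2 + ρ^2*s^2 := by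
  ring

lemma ite_split (mp : ℕ) (g : ℕ → ℝ) :
    ∑ i ∈ range (mp+1), (if i = mp then 0 else g i) = ∑ i ∈ range mp, g i := by
  rw [Finset.sum_range_succ, if_pos rfl, add_zero]
  exact Finset.sum_congr rfl fun i hi => if_neg (Nat.ne_of_lt (mem_range.mp hi))

lemma shift_split (mp : ℕ) (g : ℕ → ℝ) (hg : g 0 = 0) :
    ∑ i ∈ range (mp+1), g i = ∑ i ∈ range mp, g (i+1) := by
  rw [Finset.sum_range_succ' g mp, hg, add_zero]

lemma central (mp : ℕ) (ρ : ℝ) (hρ : 0 < ρ) (C ζs : E)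
    (Q : ℕ → E → ℝ) (μs : ℕ → ℝ) (γs : ℕ → E)
    (x w : ℕ → E) (μ' μ0 : ℕ → ℝ) (γ' γ0 : ℕ → E)
    (hCζs : ⟪C, ζs⟫ = 0)
    (hμo : ∀ i < mp+1, μ' (2*i+1) = μ0 (2*i+1) + ρ*⟪C, x (2*i+1)⟫)
    (hμe : ∀ i < mp+1, μ' (2*i+2) = μ0 (2*i+2) + ρ*⟪C, x (2*i+2)⟫)
    (hγo : ∀ i < mp+1, γ' (2*i+1) = γ0 (2*i+1) + ρ•(x (2*i+1) - x (2*i+2)))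
    (hγe : ∀ i < mp, γ' (2*i+2) = γ0 (2*i+2) + ρ•(x (2*i+2) - x (2*i+3)))
    (hVIodd : ∀ i < mp+1,
      Q (2*i+1) (x (2*i+1)) + ⟪μ' (2*i+1) • C + γ' (2*i+1) - (if i = 0 then 0 else γ' (2*i))
        + ρ•((if i = 0 then 0 else x (2*i) - w (2*i)) + (x (2*i+2) - w (2*i+2))), x (2*i+1) - ζs⟫
      ≤ Q (2*i+1) ζs)
    (hVIeven : ∀ i < mp+1,
      Q (2*i+2) (x (2*i+2)) + ⟪μ' (2*i+2) • C + (if i = mp then 0 else γ' (2*i+2)) - γ' (2*i+1),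
        x (2*i+2) - ζs⟫ ≤ Q (2*i+2) ζs)
    (hM : ∀ i < mp+1, ⟪C, x (2*i+2)⟫ * ⟪C, x (2*i+2) - w (2*i+2)⟫
        + (if i = mp then 0 else ⟪x (2*i+2) - x (2*i+3), x (2*i+2) - w (2*i+2)⟫)
        - ⟪x (2*i+1) - x (2*i+2), x (2*i+2) - w (2*i+2)⟫ ≤ 0)
    (hsad : (∑ i ∈ range (mp+1), Q (2*i+1) ζs) + (∑ i ∈ range (mp+1), Q (2*i+2) ζs)
      ≤ (∑ i ∈ range (mp+1), Q (2*i+1) (x (2*i+1)))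
        + (∑ i ∈ range (mp+1), Q (2*i+2) (x (2*i+2)))
        + (∑ i ∈ range (mp+1), μs (2*i+1) * ⟪C, x (2*i+1)⟫)
        + (∑ i ∈ range (mp+1), μs (2*i+2) * ⟪C, x (2*i+2)⟫)
        + (∑ i ∈ range (mp+1), ⟪γs (2*i+1), x (2*i+1) - x (2*i+2)⟫)
        + (∑ i ∈ range mp, ⟪γs (2*i+2), x (2*i+2) - x (2*i+3)⟫)) :
    ((∑ i ∈ range (mp+1), (μ' (2*i+1) - μs (2*i+1))^2)
      + (∑ i ∈ range (mp+1), (μ' (2*i+2) - μs (2*i+2))^2)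
      + (∑ i ∈ range (mp+1), ‖γ' (2*i+1) - γs (2*i+1)‖^2)
      + (∑ i ∈ range mp, ‖γ' (2*i+2) - γs (2*i+2)‖^2))
    + ρ^2 * ((∑ i ∈ range (mp+1), ‖x (2*i+2) - ζs‖^2) + (∑ i ∈ range mp, ‖x (2*i+2) - ζs‖^2))
    + ρ^2 * (∑ i ∈ range (mp+1), ⟪C, x (2*i+2)⟫^2)
    + ρ^2 * ((∑ i ∈ range (mp+1), ⟪C, x (2*i+1)⟫^2) + (∑ i ∈ range (mp+1), ⟪C, x (2*i+2)⟫^2)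
        + (∑ i ∈ range (mp+1), ‖x (2*i+1) - x (2*i+2)‖^2) + (∑ i ∈ range mp, ‖x (2*i+2) - x (2*i+3)‖^2))
    ≤ ((∑ i ∈ range (mp+1), (μ0 (2*i+1) - μs (2*i+1))^2)
      + (∑ i ∈ range (mp+1), (μ0 (2*i+2) - μs (2*i+2))^2)
      + (∑ i ∈ range (mp+1), ‖γ0 (2*i+1) - γs (2*i+1)‖^2)
      + (∑ i ∈ range mp, ‖γ0 (2*i+2) - γs (2*i+2)‖^2))
    + ρ^2 * ((∑ i ∈ range (mp+1), ‖w (2*i+2) - ζs‖^2) + (∑ i ∈ range mp, ‖w (2*i+2) - ζs‖^2))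
    + ρ^2 * (∑ i ∈ range (mp+1), ⟪C, w (2*i+2)⟫^2) := by

  have hGodd : (∑ i ∈ range (mp+1), (Q (2*i+1) (x (2*i+1)) +
      ⟪μ' (2*i+1) • C + γ' (2*i+1) - (if i = 0 then 0 else γ' (2*i))
        + ρ•((if i = 0 then 0 else x (2*i) - w (2*i)) + (x (2*i+2) - w (2*i+2))), x (2*i+1) - ζs⟫))
      ≤ ∑ i ∈ range (mp+1), Q (2*i+1) ζs :=
    Finset.sum_le_sum fun i hi => hVIodd i (mem_range.mp hi)
  have hGeven : (∑ i ∈ range (mp+1), (Q (2*i+2) (x (2*i+2)) +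
      ⟪μ' (2*i+2) • C + (if i = mp then 0 else γ' (2*i+2)) - γ' (2*i+1), x (2*i+2) - ζs⟫))
      ≤ ∑ i ∈ range (mp+1), Q (2*i+2) ζs :=
    Finset.sum_le_sum fun i hi => hVIeven i (mem_range.mp hi)
  have SGexp : ∀ i ∈ range (mp+1),
      (Q (2*i+1) (x (2*i+1)) + ⟪μ' (2*i+1) • C + γ' (2*i+1) - (if i = 0 then 0 else γ' (2*i))
        + ρ•((if i = 0 then 0 else x (2*i) - w (2*i)) + (x (2*i+2) - w (2*i+2))), x (2*i+1) - ζs⟫)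
      = Q (2*i+1) (x (2*i+1)) + (μ' (2*i+1) * ⟪C, x (2*i+1)⟫
        + ⟪γ' (2*i+1), x (2*i+1) - ζs⟫
        - ⟪(if i = 0 then (0:E) else γ' (2*i)), x (2*i+1) - ζs⟫
        + ρ * ⟪(if i = 0 then (0:E) else x (2*i) - w (2*i)), x (2*i+1) - ζs⟫
        + ρ * ⟪x (2*i+2) - w (2*i+2), x (2*i+1) - ζs⟫) := by
    intro i _
    have hc : ⟪C, x (2*i+1) - ζs⟫ = ⟪C, x (2*i+1)⟫ := by
      rw [inner_sub_right, hCζs, sub_zero]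
    simp only [inner_add_left, inner_sub_left, real_inner_smul_left, hc]
    ring
  rw [Finset.sum_congr rfl SGexp] at hGodd
  have SHexp : ∀ i ∈ range (mp+1),
      (Q (2*i+2) (x (2*i+2)) + ⟪μ' (2*i+2) • C + (if i = mp then 0 else γ' (2*i+2)) - γ' (2*i+1),
        x (2*i+2) - ζs⟫)
      = Q (2*i+2) (x (2*i+2)) + (μ' (2*i+2) * ⟪C, x (2*i+2)⟫
        + (if i = mp then 0 else ⟪γ' (2*i+2), x (2*i+2) - ζs⟫)
        - ⟪γ' (2*i+1), x (2*i+2) - ζs⟫) := by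
    intro i _
    have hc : ⟪C, x (2*i+2) - ζs⟫ = ⟪C, x (2*i+2)⟫ := by
      rw [inner_sub_right, hCζs, sub_zero]
    simp only [inner_add_left, inner_sub_left, real_inner_smul_left, hc,
      apply_ite (fun v : E => (inner ℝ v (x (2*i+2) - ζs) : ℝ)), inner_zero_left]
  rw [Finset.sum_congr rfl SHexp] at hGeven
  simp only [Finset.sum_add_distrib, Finset.sum_sub_distrib, ← Finset.mul_sum] at hGodd hGeven
  have sh1 : ∑ i ∈ range (mp+1), ⟪(if i = 0 then (0:E) else γ' (2*i)), x (2*i+1) - ζs⟫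
      = ∑ i ∈ range mp, ⟪γ' (2*i+2), x (2*i+3) - ζs⟫ := by
    rw [shift_split mp _ (by simp)]
    refine Finset.sum_congr rfl fun i _ => ?_
    rw [if_neg (Nat.succ_ne_zero i), show 2*(i+1)+1 = 2*i+3 from by ring,
      show 2*(i+1) = 2*i+2 from by ring]
  have sh2 : ∑ i ∈ range (mp+1), ⟪(if i = 0 then (0:E) else x (2*i) - w (2*i)), x (2*i+1) - ζs⟫
      = ∑ i ∈ range mp, ⟪x (2*i+2) - w (2*i+2), x (2*i+3) - ζs⟫ := by
    rw [shift_split mp _ (by simp)]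
    refine Finset.sum_congr rfl fun i _ => ?_
    rw [if_neg (Nat.succ_ne_zero i), show 2*(i+1)+1 = 2*i+3 from by ring,
      show 2*(i+1) = 2*i+2 from by ring]
  have sh3 : ∑ i ∈ range (mp+1), (if i = mp then 0 else ⟪γ' (2*i+2), x (2*i+2) - ζs⟫)
      = ∑ i ∈ range mp, ⟪γ' (2*i+2), x (2*i+2) - ζs⟫ :=
    ite_split mp _
  rw [sh1, sh2] at hGodd
  rw [sh3] at hGeven
  have hGoddρ := mul_le_mul_of_nonneg_left hGodd (le_of_lt hρ)
  have hGevenρ := mul_le_mul_of_nonneg_left hGeven (le_of_lt hρ)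
  have hsadρ := mul_le_mul_of_nonneg_left hsad (le_of_lt hρ)
  -- relations between inner-product sums (scaled)
  have relb5 : ρ * ∑ i ∈ range (mp+1), ⟪γ' (2*i+1), x (2*i+1) - x (2*i+2)⟫
      = ρ * (∑ i ∈ range (mp+1), ⟪γ' (2*i+1), x (2*i+1) - ζs⟫)
        - ρ * ∑ i ∈ range (mp+1), ⟪γ' (2*i+1), x (2*i+2) - ζs⟫ := by
    rw [← mul_sub, ← Finset.sum_sub_distrib]
    congr 1
    refine Finset.sum_congr rfl fun i _ => ?_
    rw [← inner_sub_right]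
    congr 1
    abel
  have relb6 : ρ * ∑ i ∈ range mp, ⟪γ' (2*i+2), x (2*i+2) - x (2*i+3)⟫
      = ρ * (∑ i ∈ range mp, ⟪γ' (2*i+2), x (2*i+2) - ζs⟫)
        - ρ * ∑ i ∈ range mp, ⟪γ' (2*i+2), x (2*i+3) - ζs⟫ := by
    rw [← mul_sub, ← Finset.sum_sub_distrib]
    congr 1
    refine Finset.sum_congr rfl fun i _ => ?_
    rw [← inner_sub_right]
    congr 1
    abel
  have relc5 : ρ^2 * ∑ i ∈ range (mp+1), ⟪x (2*i+2) - w (2*i+2), x (2*i+1) - ζs⟫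
      = ρ^2 * (∑ i ∈ range (mp+1), ⟪x (2*i+2) - w (2*i+2), x (2*i+1) - x (2*i+2)⟫)
        + ρ^2 * (∑ i ∈ range (mp+1), ⟪x (2*i+2) - w (2*i+2), x (2*i+2) - ζs⟫) := by
    rw [← mul_add, ← Finset.sum_add_distrib]
    congr 1
    refine Finset.sum_congr rfl fun i _ => ?_
    rw [← inner_add_right]
    congr 1
    abel
  have relc7 : ρ^2 * ∑ i ∈ range mp, ⟪x (2*i+2) - w (2*i+2), x (2*i+3) - ζs⟫
      = ρ^2 * (∑ i ∈ range mp, ⟪x (2*i+2) - w (2*i+2), x (2*i+2) - ζs⟫)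
        - ρ^2 * (∑ i ∈ range mp, ⟪x (2*i+2) - w (2*i+2), x (2*i+2) - x (2*i+3)⟫) := by
    rw [← mul_sub, ← Finset.sum_sub_distrib]
    congr 1
    refine Finset.sum_congr rfl fun i _ => ?_
    rw [← inner_sub_right]
    congr 1
    abel
  -- quadratic identities (scaled, polynomial form)
  have Qmuo : 2*ρ*((∑ i ∈ range (mp+1), μ' (2*i+1) * ⟪C, x (2*i+1)⟫)
      - ∑ i ∈ range (mp+1), μs (2*i+1) * ⟪C, x (2*i+1)⟫)
      = (∑ i ∈ range (mp+1), (μ' (2*i+1) - μs (2*i+1))^2)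
        - (∑ i ∈ range (mp+1), (μ0 (2*i+1) - μs (2*i+1))^2)
        + ρ^2 * ∑ i ∈ range (mp+1), ⟪C, x (2*i+1)⟫^2 := by
    rw [← Finset.sum_sub_distrib, Finset.mul_sum, ← Finset.sum_sub_distrib, Finset.mul_sum,
      ← Finset.sum_add_distrib]
    refine Finset.sum_congr rfl fun i hi => ?_
    rw [← sub_mul, hμo i (mem_range.mp hi)]
    exact mu_id2 ρ _ _ _
  have Qmue : 2*ρ*((∑ i ∈ range (mp+1), μ' (2*i+2) * ⟪C, x (2*i+2)⟫)
      - ∑ i ∈ range (mp+1), μs (2*i+2) * ⟪C, x (2*i+2)⟫)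
      = (∑ i ∈ range (mp+1), (μ' (2*i+2) - μs (2*i+2))^2)
        - (∑ i ∈ range (mp+1), (μ0 (2*i+2) - μs (2*i+2))^2)
        + ρ^2 * ∑ i ∈ range (mp+1), ⟪C, x (2*i+2)⟫^2 := by
    rw [← Finset.sum_sub_distrib, Finset.mul_sum, ← Finset.sum_sub_distrib, Finset.mul_sum,
      ← Finset.sum_add_distrib]
    refine Finset.sum_congr rfl fun i hi => ?_
    rw [← sub_mul, hμe i (mem_range.mp hi)]
    exact mu_id2 ρ _ _ _
  have Qgo : 2*ρ*((∑ i ∈ range (mp+1), ⟪γ' (2*i+1), x (2*i+1) - x (2*i+2)⟫)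
      - ∑ i ∈ range (mp+1), ⟪γs (2*i+1), x (2*i+1) - x (2*i+2)⟫)
      = (∑ i ∈ range (mp+1), ‖γ' (2*i+1) - γs (2*i+1)‖^2)
        - (∑ i ∈ range (mp+1), ‖γ0 (2*i+1) - γs (2*i+1)‖^2)
        + ρ^2 * ∑ i ∈ range (mp+1), ‖x (2*i+1) - x (2*i+2)‖^2 := by
    rw [← Finset.sum_sub_distrib, Finset.mul_sum, ← Finset.sum_sub_distrib, Finset.mul_sum,
      ← Finset.sum_add_distrib]
    refine Finset.sum_congr rfl fun i hi => ?_
    rw [← inner_sub_left, hγo i (mem_range.mp hi)]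
    exact ga_id2 ρ _ _ _
  have Qge : 2*ρ*((∑ i ∈ range mp, ⟪γ' (2*i+2), x (2*i+2) - x (2*i+3)⟫)
      - ∑ i ∈ range mp, ⟪γs (2*i+2), x (2*i+2) - x (2*i+3)⟫)
      = (∑ i ∈ range mp, ‖γ' (2*i+2) - γs (2*i+2)‖^2)
        - (∑ i ∈ range mp, ‖γ0 (2*i+2) - γs (2*i+2)‖^2)
        + ρ^2 * ∑ i ∈ range mp, ‖x (2*i+2) - x (2*i+3)‖^2 := by
    rw [← Finset.sum_sub_distrib, Finset.mul_sum, ← Finset.sum_sub_distrib, Finset.mul_sum,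
      ← Finset.sum_add_distrib]
    refine Finset.sum_congr rfl fun i hi => ?_
    rw [← inner_sub_left, hγe i (mem_range.mp hi)]
    exact ga_id2 ρ _ _ _
  have QD1 : ρ^2 * ∑ i ∈ range (mp+1), ⟪x (2*i+2) - w (2*i+2), x (2*i+2) - ζs⟫
      = ρ^2 * (∑ i ∈ range (mp+1), ‖x (2*i+2) - ζs‖^2)/2
        - ρ^2 * (∑ i ∈ range (mp+1), ‖w (2*i+2) - ζs‖^2)/2
        + ρ^2 * (∑ i ∈ range (mp+1), ‖x (2*i+2) - w (2*i+2)‖^2)/2 := by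
    rw [Finset.sum_congr rfl fun i _ => inner_diff_id (x (2*i+2)) (w (2*i+2)) ζs,
      ← Finset.sum_div, Finset.sum_add_distrib, Finset.sum_sub_distrib]
    ring
  have QD2 : ρ^2 * ∑ i ∈ range mp, ⟪x (2*i+2) - w (2*i+2), x (2*i+2) - ζs⟫
      = ρ^2 * (∑ i ∈ range mp, ‖x (2*i+2) - ζs‖^2)/2
        - ρ^2 * (∑ i ∈ range mp, ‖w (2*i+2) - ζs‖^2)/2
        + ρ^2 * (∑ i ∈ range mp, ‖x (2*i+2) - w (2*i+2)‖^2)/2 := by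
    rw [Finset.sum_congr rfl fun i _ => inner_diff_id (x (2*i+2)) (w (2*i+2)) ζs,
      ← Finset.sum_div, Finset.sum_add_distrib, Finset.sum_sub_distrib]
    ring
  have QC : ρ^2 * ∑ i ∈ range (mp+1), ⟪C, x (2*i+2)⟫ * ⟪C, x (2*i+2) - w (2*i+2)⟫
      = ρ^2 * (∑ i ∈ range (mp+1), ⟪C, x (2*i+2)⟫^2)/2
        - ρ^2 * (∑ i ∈ range (mp+1), ⟪C, w (2*i+2)⟫^2)/2
        + ρ^2 * (∑ i ∈ range (mp+1), (⟪C, x (2*i+2)⟫ - ⟪C, w (2*i+2)⟫)^2)/2 := by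
    rw [Finset.sum_congr rfl (g := fun i => (⟪C, x (2*i+2)⟫^2 - ⟪C, w (2*i+2)⟫^2
        + (⟪C, x (2*i+2)⟫ - ⟪C, w (2*i+2)⟫)^2)/2) fun i _ => by rw [inner_sub_right]; ring,
      ← Finset.sum_div, Finset.sum_add_distrib, Finset.sum_sub_distrib]
    ring
  -- monotonicity inequality summed and scaled
  have hMs : (∑ i ∈ range (mp+1), (⟪C, x (2*i+2)⟫ * ⟪C, x (2*i+2) - w (2*i+2)⟫
      + (if i = mp then 0 else ⟪x (2*i+2) - x (2*i+3), x (2*i+2) - w (2*i+2)⟫)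
      - ⟪x (2*i+1) - x (2*i+2), x (2*i+2) - w (2*i+2)⟫)) ≤ 0 :=
    Finset.sum_nonpos fun i hi => hM i (mem_range.mp hi)
  simp only [Finset.sum_add_distrib, Finset.sum_sub_distrib] at hMs
  rw [ite_split mp (fun i => ⟪x (2*i+2) - x (2*i+3), x (2*i+2) - w (2*i+2)⟫)] at hMs
  have hMρ := mul_le_mul_of_nonneg_left hMs (sq_nonneg ρ)
  rw [mul_zero] at hMρ
  have commA : ρ^2 * ∑ i ∈ range (mp+1), ⟪x (2*i+1) - x (2*i+2), x (2*i+2) - w (2*i+2)⟫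
      = ρ^2 * ∑ i ∈ range (mp+1), ⟪x (2*i+2) - w (2*i+2), x (2*i+1) - x (2*i+2)⟫ := by
    congr 1
    exact Finset.sum_congr rfl fun i _ => real_inner_comm _ _
  have commB : ρ^2 * ∑ i ∈ range mp, ⟪x (2*i+2) - x (2*i+3), x (2*i+2) - w (2*i+2)⟫
      = ρ^2 * ∑ i ∈ range mp, ⟪x (2*i+2) - w (2*i+2), x (2*i+2) - x (2*i+3)⟫ := by
    congr 1
    exact Finset.sum_congr rfl fun i _ => real_inner_comm _ _
  have hDnn : (0:ℝ) ≤ ρ^2 * ∑ i ∈ range (mp+1), ‖x (2*i+2) - w (2*i+2)‖^2 :=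
    mul_nonneg (sq_nonneg ρ) (Finset.sum_nonneg fun i _ => by positivity)
  have hDnn2 : (0:ℝ) ≤ ρ^2 * ∑ i ∈ range mp, ‖x (2*i+2) - w (2*i+2)‖^2 :=
    mul_nonneg (sq_nonneg ρ) (Finset.sum_nonneg fun i _ => by positivity)
  have hPnn : (0:ℝ) ≤ ρ^2 * ∑ i ∈ range (mp+1), (⟪C, x (2*i+2)⟫ - ⟪C, w (2*i+2)⟫)^2 :=
    mul_nonneg (sq_nonneg ρ) (Finset.sum_nonneg fun i _ => by positivity)
  linarith [hGoddρ, hGevenρ, hsadρ, relb5, relb6, relc5, relc7, Qmuo, Qmue, Qgo, Qge,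
    QD1, QD2, QC, hMρ, commA, commB, hDnn, hDnn2, hPnn]


lemma sum_Icc_split (m : ℕ) (f : ℕ → ℝ) :
    ∑ k ∈ Icc 1 (2*m), f k = (∑ i ∈ range m, f (2*i+1)) + ∑ i ∈ range m, f (2*i+2) := by
  induction m with
  | zero => simp
  | succ mm ih =>
    rw [show 2*(mm+1) = (2*mm+1)+1 from by ring, Finset.sum_Icc_succ_top (by omega),
      show 2*mm+1 = (2*mm)+1 from rfl, Finset.sum_Icc_succ_top (by omega), ih,
      Finset.sum_range_succ, Finset.sum_range_succ,
      show 2*mm+1+1 = 2*mm+2 from by ring]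
    ring

lemma sum_Icc_split_odd (m : ℕ) (f : ℕ → ℝ) :
    ∑ k ∈ Icc 1 (2*m+1), f k = (∑ i ∈ range (m+1), f (2*i+1)) + ∑ i ∈ range m, f (2*i+2) := by
  rw [show 2*m+1 = (2*m)+1 from rfl, Finset.sum_Icc_succ_top (by omega), sum_Icc_split m f,
    Finset.sum_range_succ]
  ring


def Afun (mp : ℕ) (C : E) (ζl : ℕ → E) : ℝ :=
  (∑ i ∈ range (mp+1), ⟪C, ζl (2*i+1)⟫^2) + (∑ i ∈ range (mp+1), ⟪C, ζl (2*i+2)⟫^2)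
    + (∑ i ∈ range (mp+1), ‖ζl (2*i+1) - ζl (2*i+2)‖^2)
    + (∑ i ∈ range mp, ‖ζl (2*i+2) - ζl (2*i+3)‖^2)

def Vfun (mp : ℕ) (ρ : ℝ) (C ζs : E) (μs : ℕ → ℝ) (γs : ℕ → E)
    (μl : ℕ → ℝ) (γl : ℕ → E) (ζl : ℕ → E) : ℝ :=
  ((∑ i ∈ range (mp+1), (μl (2*i+1) - μs (2*i+1))^2)
      + (∑ i ∈ range (mp+1), (μl (2*i+2) - μs (2*i+2))^2)
      + (∑ i ∈ range (mp+1), ‖γl (2*i+1) - γs (2*i+1)‖^2)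
      + (∑ i ∈ range mp, ‖γl (2*i+2) - γs (2*i+2)‖^2))
    + ρ^2 * ((∑ i ∈ range (mp+1), ‖ζl (2*i+2) - ζs‖^2) + (∑ i ∈ range mp, ‖ζl (2*i+2) - ζs‖^2))
    + ρ^2 * (∑ i ∈ range (mp+1), ⟪C, ζl (2*i+2)⟫^2)

end Helpers

/-- Theorem 1, part 2: the primal residual of the consensus constraint converges to zero, r_k^l = ζ_k^l − ζ_{k+1}^l → 0. -/
theorem dsgcdmm_consensus_residual_tendsto_zero
    (d K : ℕ) (hd : 1 ≤ d) (hK : 2 ≤ K) (hKeven : Even K)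
    (n : ℕ → ℕ) (hn : ∀ k ∈ Icc 1 K, 1 ≤ n k)
    (y : ∀ k, EuclideanSpace ℝ (Fin (n k)))
    (P : ∀ k, Matrix (Fin (n k)) (Fin d) ℝ)
    (lam : ℝ) (hlam : 0 ≤ lam)
    (ω : ℕ → Fin d → ℝ) (hω : ∀ k ∈ Icc 1 K, ∀ j, 0 ≤ ω k j)
    (C : EuclideanSpace ℝ (Fin d))
    (Q : ℕ → EuclideanSpace ℝ (Fin d) → ℝ)
    (hQ : ∀ k, ∀ x : EuclideanSpace ℝ (Fin d), Q k x =
      (1 / (2 * (n k : ℝ))) * ‖y k - (P k).toEuclideanLin x‖ ^ 2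
        + lam * ∑ j, ω k j * |x j|)
    (ρ : ℝ) (hρ : 0 < ρ)
    (ζ : ℕ → ℕ → EuclideanSpace ℝ (Fin d))
    (μ : ℕ → ℕ → ℝ)
    (γ : ℕ → ℕ → EuclideanSpace ℝ (Fin d))
    (hdyn1 : ∀ l : ℕ, ∀ z : EuclideanSpace ℝ (Fin d),
      Q 1 (ζ (l+1) 1) + μ l 1 * ⟪C, ζ (l+1) 1⟫ + (ρ/2) * ⟪C, ζ (l+1) 1⟫ ^ 2
          + ⟪γ l 1, ζ (l+1) 1 - ζ l 2⟫ + (ρ/2) * ‖ζ (l+1) 1 - ζ l 2‖ ^ 2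
        ≤ Q 1 z + μ l 1 * ⟪C, z⟫ + (ρ/2) * ⟪C, z⟫ ^ 2
          + ⟪γ l 1, z - ζ l 2⟫ + (ρ/2) * ‖z - ζ l 2‖ ^ 2)
    (hdynodd : ∀ l : ℕ, ∀ k, Odd k → 1 < k → k < K → ∀ z : EuclideanSpace ℝ (Fin d),
      Q k (ζ (l+1) k) + μ l k * ⟪C, ζ (l+1) k⟫ + (ρ/2) * ⟪C, ζ (l+1) k⟫ ^ 2
          + ⟪γ l (k-1), ζ l (k-1) - ζ (l+1) k⟫ + ⟪γ l k, ζ (l+1) k - ζ l (k+1)⟫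
          + (ρ/2) * ‖ζ l (k-1) - ζ (l+1) k‖ ^ 2 + (ρ/2) * ‖ζ (l+1) k - ζ l (k+1)‖ ^ 2
        ≤ Q k z + μ l k * ⟪C, z⟫ + (ρ/2) * ⟪C, z⟫ ^ 2
          + ⟪γ l (k-1), ζ l (k-1) - z⟫ + ⟪γ l k, z - ζ l (k+1)⟫
          + (ρ/2) * ‖ζ l (k-1) - z‖ ^ 2 + (ρ/2) * ‖z - ζ l (k+1)‖ ^ 2)
    (hdyneven : ∀ l : ℕ, ∀ k, Even k → 0 < k → k < K → ∀ z : EuclideanSpace ℝ (Fin d),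
      Q k (ζ (l+1) k) + μ l k * ⟪C, ζ (l+1) k⟫ + (ρ/2) * ⟪C, ζ (l+1) k⟫ ^ 2
          + ⟪γ l (k-1), ζ (l+1) (k-1) - ζ (l+1) k⟫ + ⟪γ l k, ζ (l+1) k - ζ (l+1) (k+1)⟫
          + (ρ/2) * ‖ζ (l+1) (k-1) - ζ (l+1) k‖ ^ 2 + (ρ/2) * ‖ζ (l+1) k - ζ (l+1) (k+1)‖ ^ 2
        ≤ Q k z + μ l k * ⟪C, z⟫ + (ρ/2) * ⟪C, z⟫ ^ 2
          + ⟪γ l (k-1), ζ (l+1) (k-1) - z⟫ + ⟪γ l k, z - ζ (l+1) (k+1)⟫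
          + (ρ/2) * ‖ζ (l+1) (k-1) - z‖ ^ 2 + (ρ/2) * ‖z - ζ (l+1) (k+1)‖ ^ 2)
    (hdynK : ∀ l : ℕ, ∀ z : EuclideanSpace ℝ (Fin d),
      Q K (ζ (l+1) K) + μ l K * ⟪C, ζ (l+1) K⟫ + (ρ/2) * ⟪C, ζ (l+1) K⟫ ^ 2
          + ⟪γ l (K-1), ζ (l+1) (K-1) - ζ (l+1) K⟫ + (ρ/2) * ‖ζ (l+1) (K-1) - ζ (l+1) K‖ ^ 2
        ≤ Q K z + μ l K * ⟪C, z⟫ + (ρ/2) * ⟪C, z⟫ ^ 2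
          + ⟪γ l (K-1), ζ (l+1) (K-1) - z⟫ + (ρ/2) * ‖ζ (l+1) (K-1) - z‖ ^ 2)
    (hμ : ∀ l : ℕ, ∀ k ∈ Icc 1 K, μ (l+1) k = μ l k + ρ * ⟪C, ζ (l+1) k⟫)
    (hγ : ∀ l : ℕ, ∀ k ∈ Icc 1 (K-1),
      γ (l+1) k = γ l k + ρ • (ζ (l+1) k - ζ (l+1) (k+1)))
    (ζs : EuclideanSpace ℝ (Fin d)) (μs : ℕ → ℝ) (γs : ℕ → EuclideanSpace ℝ (Fin d))
    (hCζs : ⟪C, ζs⟫ = 0)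
    (hmin : ∀ z : EuclideanSpace ℝ (Fin d), ⟪C, z⟫ = 0 →
      ∑ k ∈ Icc 1 K, Q k ζs ≤ ∑ k ∈ Icc 1 K, Q k z)
    (hsaddle : ∀ zf : ℕ → EuclideanSpace ℝ (Fin d),
      (∑ k ∈ Icc 1 K, Q k ζs) + (∑ k ∈ Icc 1 K, μs k * ⟪C, ζs⟫)
          + (∑ k ∈ Icc 1 (K-1), ⟪γs k, ζs - ζs⟫)
        ≤ (∑ k ∈ Icc 1 K, Q k (zf k)) + (∑ k ∈ Icc 1 K, μs k * ⟪C, zf k⟫)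
          + (∑ k ∈ Icc 1 (K-1), ⟪γs k, zf k - zf (k+1)⟫))
    :
    ∀ k ∈ Icc 1 (K-1),
      Tendsto (fun l : ℕ => ζ l k - ζ l (k+1)) atTop
        (nhds (0 : EuclideanSpace ℝ (Fin d))) := by
  
  classical
  obtain ⟨mp, hK2⟩ : ∃ mp, K = 2*(mp+1) := by
    obtain ⟨c, hc⟩ := hKeven; exact ⟨c-1, by omega⟩
  -- convexity of the local objectives
  have hQconv : ∀ k, 1 ≤ k → k ≤ K → ConvexOn ℝ Set.univ (Q k) := by
    intro k h1 h2
    have hfun : Q k = fun x : EuclideanSpace ℝ (Fin d) =>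
        (1/(2*(n k:ℝ))) * ‖y k - (P k).toEuclideanLin x‖^2 + lam * ∑ j, ω k j * |x j| :=
      funext (hQ k)
    rw [hfun]
    exact convexQ (y k) (Matrix.toEuclideanLin (P k)) (1/(2*(n k:ℝ))) lam (by positivity)
      hlam (ω k) (hω k (mem_Icc.mpr ⟨h1, h2⟩))
  -- clean variational inequalities for odd machines
  have hVIO : ∀ l : ℕ, ∀ i < mp+1, ∀ u : EuclideanSpace ℝ (Fin d),
      Q (2*i+1) (ζ (l+1) (2*i+1)) + ⟪μ (l+1) (2*i+1) • C + γ (l+1) (2*i+1)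
        - (if i = 0 then 0 else γ (l+1) (2*i))
        + ρ•((if i = 0 then 0 else ζ (l+1) (2*i) - ζ l (2*i)) + (ζ (l+1) (2*i+2) - ζ l (2*i+2))),
        ζ (l+1) (2*i+1) - u⟫ ≤ Q (2*i+1) u := by
    intro l i hi u
    rcases Nat.eq_zero_or_pos i with hi0 | hipos
    · subst hi0
      simp only [Nat.mul_zero, Nat.zero_add, eq_self_iff_true, if_true]
      have hm : ∀ z : EuclideanSpace ℝ (Fin d),
          Q 1 (ζ (l+1) 1) + μ l 1 * ⟪C, ζ (l+1) 1⟫ + (ρ/2) * ⟪C, ζ (l+1) 1⟫^2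
            + ⟪(0:EuclideanSpace ℝ (Fin d)), 0 - ζ (l+1) 1⟫ + ⟪γ l 1, ζ (l+1) 1 - ζ l 2⟫
            + (ρ/2)*0*‖(0:EuclideanSpace ℝ (Fin d)) - ζ (l+1) 1‖^2
            + (ρ/2)*1*‖ζ (l+1) 1 - ζ l 2‖^2
          ≤ Q 1 z + μ l 1 * ⟪C, z⟫ + (ρ/2) * ⟪C, z⟫^2
            + ⟪(0:EuclideanSpace ℝ (Fin d)), 0 - z⟫ + ⟪γ l 1, z - ζ l 2⟫
            + (ρ/2)*0*‖(0:EuclideanSpace ℝ (Fin d)) - z‖^2 + (ρ/2)*1*‖z - ζ l 2‖^2 := by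
        intro z
        have h := hdyn1 l z
        simp only [inner_zero_left, mul_zero, zero_mul, mul_one, add_zero]
        linarith
      have hvi := master_VI (Q 1) (hQconv 1 le_rfl (by omega)) ρ hρ C (ζ (l+1) 1) (μ l 1)
        0 0 (γ l 1) (ζ l 2) 0 1 le_rfl zero_le_one hm u
      have hveq : (μ l 1 + ρ*⟪C, ζ (l+1) 1⟫) • C - (0:EuclideanSpace ℝ (Fin d)) + γ l 1
            + (ρ*0) • (ζ (l+1) 1 - 0) + (ρ*1) • (ζ (l+1) 1 - ζ l 2)
          = μ (l+1) 1 • C + γ (l+1) 1 - 0 + ρ • (0 + (ζ (l+1) 2 - ζ l 2)) := by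
        rw [hμ l 1 (mem_Icc.mpr ⟨le_rfl, by omega⟩), hγ l 1 (mem_Icc.mpr ⟨le_rfl, by omega⟩)]
        module
      rw [← hveq]
      exact hvi
    · have hk1 : 1 < 2*i+1 := by omega
      have hkK : 2*i+1 < K := by omega
      have hm : ∀ z : EuclideanSpace ℝ (Fin d),
          Q (2*i+1) (ζ (l+1) (2*i+1)) + μ l (2*i+1) * ⟪C, ζ (l+1) (2*i+1)⟫
            + (ρ/2) * ⟪C, ζ (l+1) (2*i+1)⟫^2
            + ⟪γ l (2*i), ζ l (2*i) - ζ (l+1) (2*i+1)⟫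
            + ⟪γ l (2*i+1), ζ (l+1) (2*i+1) - ζ l (2*i+2)⟫
            + (ρ/2)*1*‖ζ l (2*i) - ζ (l+1) (2*i+1)‖^2
            + (ρ/2)*1*‖ζ (l+1) (2*i+1) - ζ l (2*i+2)‖^2
          ≤ Q (2*i+1) z + μ l (2*i+1) * ⟪C, z⟫ + (ρ/2) * ⟪C, z⟫^2
            + ⟪γ l (2*i), ζ l (2*i) - z⟫ + ⟪γ l (2*i+1), z - ζ l (2*i+2)⟫
            + (ρ/2)*1*‖ζ l (2*i) - z‖^2 + (ρ/2)*1*‖z - ζ l (2*i+2)‖^2 := by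
        intro z
        have h := hdynodd l (2*i+1) ⟨i, by ring⟩ hk1 hkK z
        simp only [show 2*i+1-1 = 2*i from by omega, show 2*i+1+1 = 2*i+2 from by ring] at h
        simp only [mul_one]
        linarith
      have hvi := master_VI (Q (2*i+1)) (hQconv (2*i+1) (by omega) (by omega)) ρ hρ C
        (ζ (l+1) (2*i+1)) (μ l (2*i+1)) (γ l (2*i)) (ζ l (2*i)) (γ l (2*i+1)) (ζ l (2*i+2))
        1 1 zero_le_one zero_le_one hm u
      have hveq : (μ l (2*i+1) + ρ*⟪C, ζ (l+1) (2*i+1)⟫) • C - γ l (2*i) + γ l (2*i+1)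
            + (ρ*1) • (ζ (l+1) (2*i+1) - ζ l (2*i)) + (ρ*1) • (ζ (l+1) (2*i+1) - ζ l (2*i+2))
          = μ (l+1) (2*i+1) • C + γ (l+1) (2*i+1) - γ (l+1) (2*i)
            + ρ • ((ζ (l+1) (2*i) - ζ l (2*i)) + (ζ (l+1) (2*i+2) - ζ l (2*i+2))) := by
        rw [hμ l (2*i+1) (mem_Icc.mpr ⟨by omega, by omega⟩),
          hγ l (2*i) (mem_Icc.mpr ⟨by omega, by omega⟩),
          hγ l (2*i+1) (mem_Icc.mpr ⟨by omega, by omega⟩),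
          show 2*i+1 = (2*i)+1 from rfl]
        module
      rw [if_neg (by omega : ¬ i = 0), if_neg (by omega : ¬ i = 0), ← hveq]
      exact hvi
  
  -- clean variational inequalities for even machines
  have hVIE : ∀ l : ℕ, ∀ i < mp+1, ∀ u : EuclideanSpace ℝ (Fin d),
      Q (2*i+2) (ζ (l+1) (2*i+2)) + ⟪μ (l+1) (2*i+2) • C
        + (if i = mp then 0 else γ (l+1) (2*i+2)) - γ (l+1) (2*i+1),
        ζ (l+1) (2*i+2) - u⟫ ≤ Q (2*i+2) u := by
    intro l i hi u
    rcases eq_or_ne i mp with him | him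
    · have hm : ∀ z : EuclideanSpace ℝ (Fin d),
          Q (2*i+2) (ζ (l+1) (2*i+2)) + μ l (2*i+2) * ⟪C, ζ (l+1) (2*i+2)⟫
            + (ρ/2) * ⟪C, ζ (l+1) (2*i+2)⟫^2
            + ⟪γ l (2*i+1), ζ (l+1) (2*i+1) - ζ (l+1) (2*i+2)⟫
            + ⟪(0:EuclideanSpace ℝ (Fin d)), ζ (l+1) (2*i+2) - 0⟫
            + (ρ/2)*1*‖ζ (l+1) (2*i+1) - ζ (l+1) (2*i+2)‖^2
            + (ρ/2)*0*‖ζ (l+1) (2*i+2) - 0‖^2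
          ≤ Q (2*i+2) z + μ l (2*i+2) * ⟪C, z⟫ + (ρ/2) * ⟪C, z⟫^2
            + ⟪γ l (2*i+1), ζ (l+1) (2*i+1) - z⟫ + ⟪(0:EuclideanSpace ℝ (Fin d)), z - 0⟫
            + (ρ/2)*1*‖ζ (l+1) (2*i+1) - z‖^2 + (ρ/2)*0*‖z - 0‖^2 := by
        intro z
        have h := hdynK l z
        simp only [show K = 2*i+2 from by omega, show 2*i+2-1 = 2*i+1 from by omega] at h
        simp only [inner_zero_left, mul_zero, zero_mul, mul_one, add_zero]
        linarith
      have hvi := master_VI (Q (2*i+2)) (hQconv (2*i+2) (by omega) (by omega)) ρ hρ C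
        (ζ (l+1) (2*i+2)) (μ l (2*i+2)) (γ l (2*i+1)) (ζ (l+1) (2*i+1)) 0 0
        1 0 zero_le_one le_rfl hm u
      have hγK := hγ l (2*i+1) (mem_Icc.mpr ⟨by omega, by omega⟩)
      rw [show 2*i+1+1 = 2*i+2 from by ring] at hγK
      have hveq : (μ l (2*i+2) + ρ*⟪C, ζ (l+1) (2*i+2)⟫) • C - γ l (2*i+1)
            + (0:EuclideanSpace ℝ (Fin d))
            + (ρ*1) • (ζ (l+1) (2*i+2) - ζ (l+1) (2*i+1)) + (ρ*0) • (ζ (l+1) (2*i+2) - 0)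
          = μ (l+1) (2*i+2) • C + 0 - γ (l+1) (2*i+1) := by
        rw [hμ l (2*i+2) (mem_Icc.mpr ⟨by omega, by omega⟩), hγK]
        module
      rw [if_pos him, ← hveq]
      exact hvi
    · have him' : i < mp := by omega
      have hm : ∀ z : EuclideanSpace ℝ (Fin d),
          Q (2*i+2) (ζ (l+1) (2*i+2)) + μ l (2*i+2) * ⟪C, ζ (l+1) (2*i+2)⟫
            + (ρ/2) * ⟪C, ζ (l+1) (2*i+2)⟫^2
            + ⟪γ l (2*i+1), ζ (l+1) (2*i+1) - ζ (l+1) (2*i+2)⟫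
            + ⟪γ l (2*i+2), ζ (l+1) (2*i+2) - ζ (l+1) (2*i+3)⟫
            + (ρ/2)*1*‖ζ (l+1) (2*i+1) - ζ (l+1) (2*i+2)‖^2
            + (ρ/2)*1*‖ζ (l+1) (2*i+2) - ζ (l+1) (2*i+3)‖^2
          ≤ Q (2*i+2) z + μ l (2*i+2) * ⟪C, z⟫ + (ρ/2) * ⟪C, z⟫^2
            + ⟪γ l (2*i+1), ζ (l+1) (2*i+1) - z⟫ + ⟪γ l (2*i+2), z - ζ (l+1) (2*i+3)⟫
            + (ρ/2)*1*‖ζ (l+1) (2*i+1) - z‖^2 + (ρ/2)*1*‖z - ζ (l+1) (2*i+3)‖^2 := by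
        intro z
        have h := hdyneven l (2*i+2) ⟨i+1, by ring⟩ (by omega) (by omega) z
        simp only [show 2*i+2-1 = 2*i+1 from by omega, show 2*i+2+1 = 2*i+3 from by ring] at h
        simp only [mul_one]
        linarith
      have hvi := master_VI (Q (2*i+2)) (hQconv (2*i+2) (by omega) (by omega)) ρ hρ C
        (ζ (l+1) (2*i+2)) (μ l (2*i+2)) (γ l (2*i+1)) (ζ (l+1) (2*i+1)) (γ l (2*i+2))
        (ζ (l+1) (2*i+3)) 1 1 zero_le_one zero_le_one hm u
      have hγA := hγ l (2*i+1) (mem_Icc.mpr ⟨by omega, by omega⟩)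
      rw [show 2*i+1+1 = 2*i+2 from by ring] at hγA
      have hγB := hγ l (2*i+2) (mem_Icc.mpr ⟨by omega, by omega⟩)
      rw [show 2*i+2+1 = 2*i+3 from by ring] at hγB
      have hveq : (μ l (2*i+2) + ρ*⟪C, ζ (l+1) (2*i+2)⟫) • C - γ l (2*i+1) + γ l (2*i+2)
            + (ρ*1) • (ζ (l+1) (2*i+2) - ζ (l+1) (2*i+1))
            + (ρ*1) • (ζ (l+1) (2*i+2) - ζ (l+1) (2*i+3))
          = μ (l+1) (2*i+2) • C + γ (l+1) (2*i+2) - γ (l+1) (2*i+1) := by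
        rw [hμ l (2*i+2) (mem_Icc.mpr ⟨by omega, by omega⟩), hγA, hγB]
        module
      rw [if_neg him, ← hveq]
      exact hvi
  -- monotonicity of the even-machine gradients between consecutive steps
  have hMlem : ∀ l : ℕ, ∀ i < mp+1,
      ⟪C, ζ (l+2) (2*i+2)⟫ * ⟪C, ζ (l+2) (2*i+2) - ζ (l+1) (2*i+2)⟫
      + (if i = mp then 0 else ⟪ζ (l+2) (2*i+2) - ζ (l+2) (2*i+3), ζ (l+2) (2*i+2) - ζ (l+1) (2*i+2)⟫)
      - ⟪ζ (l+2) (2*i+1) - ζ (l+2) (2*i+2), ζ (l+2) (2*i+2) - ζ (l+1) (2*i+2)⟫ ≤ 0 := by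
    intro l i hi
    have h1 := hVIE (l+1) i hi (ζ (l+1) (2*i+2))
    have h2 := hVIE l i hi (ζ (l+2) (2*i+2))
    simp only [show l+1+1 = l+2 from rfl] at h1
    set G' : EuclideanSpace ℝ (Fin d) := μ (l+2) (2*i+2) • C
      + (if i = mp then 0 else γ (l+2) (2*i+2)) - γ (l+2) (2*i+1) with hG'
    set G : EuclideanSpace ℝ (Fin d) := μ (l+1) (2*i+2) • C
      + (if i = mp then 0 else γ (l+1) (2*i+2)) - γ (l+1) (2*i+1) with hG
    have hrev : ⟪G, ζ (l+1) (2*i+2) - ζ (l+2) (2*i+2)⟫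
        = -⟪G, ζ (l+2) (2*i+2) - ζ (l+1) (2*i+2)⟫ := by
      rw [← inner_neg_right]
      congr 1
      abel
    have hsub : ⟪G' - G, ζ (l+2) (2*i+2) - ζ (l+1) (2*i+2)⟫ ≤ 0 := by
      rw [inner_sub_left]
      have := h1
      have := h2
      rw [hrev] at h2
      linarith
    have hμA := hμ (l+1) (2*i+2) (mem_Icc.mpr ⟨by omega, by omega⟩)
    have hγA := hγ (l+1) (2*i+1) (mem_Icc.mpr ⟨by omega, by omega⟩)
    rw [show 2*i+1+1 = 2*i+2 from by ring] at hγA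
    simp only [show l+1+1 = l+2 from rfl] at hμA hγA
    have hexp : ⟪G' - G, ζ (l+2) (2*i+2) - ζ (l+1) (2*i+2)⟫
        = ρ * (⟪C, ζ (l+2) (2*i+2)⟫ * ⟪C, ζ (l+2) (2*i+2) - ζ (l+1) (2*i+2)⟫
          + (if i = mp then 0 else ⟪ζ (l+2) (2*i+2) - ζ (l+2) (2*i+3), ζ (l+2) (2*i+2) - ζ (l+1) (2*i+2)⟫)
          - ⟪ζ (l+2) (2*i+1) - ζ (l+2) (2*i+2), ζ (l+2) (2*i+2) - ζ (l+1) (2*i+2)⟫) := by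
      rcases eq_or_ne i mp with him | him
      · rw [hG', hG, if_pos him, if_pos him, if_pos him, hμA, hγA]
        simp only [inner_add_left, inner_sub_left, real_inner_smul_left, add_zero,
          add_smul, inner_zero_left]
        ring
      · have hγB := hγ (l+1) (2*i+2) (mem_Icc.mpr ⟨by omega, by omega⟩)
        rw [show 2*i+2+1 = 2*i+3 from by ring] at hγB
        simp only [show l+1+1 = l+2 from rfl] at hγB
        rw [hG', hG, if_neg him, if_neg him, if_neg him, hμA, hγA, hγB]
        simp only [inner_add_left, inner_sub_left, real_inner_smul_left, add_smul]
        ring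
    rw [hexp] at hsub
    exact le_of_mul_le_mul_left (by rw [mul_zero]; exact hsub) hρ
  
  -- saddle inequality in range form
  have hsadR : ∀ l : ℕ,
      (∑ i ∈ range (mp+1), Q (2*i+1) ζs) + (∑ i ∈ range (mp+1), Q (2*i+2) ζs)
      ≤ (∑ i ∈ range (mp+1), Q (2*i+1) (ζ (l+2) (2*i+1)))
        + (∑ i ∈ range (mp+1), Q (2*i+2) (ζ (l+2) (2*i+2)))
        + (∑ i ∈ range (mp+1), μs (2*i+1) * ⟪C, ζ (l+2) (2*i+1)⟫)
        + (∑ i ∈ range (mp+1), μs (2*i+2) * ⟪C, ζ (l+2) (2*i+2)⟫)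
        + (∑ i ∈ range (mp+1), ⟪γs (2*i+1), ζ (l+2) (2*i+1) - ζ (l+2) (2*i+2)⟫)
        + (∑ i ∈ range mp, ⟪γs (2*i+2), ζ (l+2) (2*i+2) - ζ (l+2) (2*i+3)⟫) := by
    intro l
    have hs := hsaddle (ζ (l+2))
    simp only [hCζs, mul_zero, sub_self, inner_zero_right, Finset.sum_const_zero, add_zero] at hs
    rw [show K = 2*(mp+1) from hK2] at hs
    rw [show 2*(mp+1)-1 = 2*mp+1 from by omega] at hs
    rw [sum_Icc_split (mp+1) (fun k => Q k ζs),
      sum_Icc_split (mp+1) (fun k => Q k (ζ (l+2) k)),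
      sum_Icc_split (mp+1) (fun k => μs k * ⟪C, ζ (l+2) k⟫),
      sum_Icc_split_odd mp (fun k => ⟪γs k, ζ (l+2) k - ζ (l+2) (k+1)⟫)] at hs
    linarith [hs]
  -- the per-step Lyapunov inequality
  have hkey : ∀ l : ℕ,
      Vfun mp ρ C ζs μs γs (μ (l+2)) (γ (l+2)) (ζ (l+2)) + ρ^2 * Afun mp C (ζ (l+2))
      ≤ Vfun mp ρ C ζs μs γs (μ (l+1)) (γ (l+1)) (ζ (l+1)) := by
    intro l
    have h := central mp ρ hρ C ζs Q μs γs (ζ (l+2)) (ζ (l+1)) (μ (l+2)) (μ (l+1))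
      (γ (l+2)) (γ (l+1)) hCζs
      (fun i hi => hμ (l+1) (2*i+1) (mem_Icc.mpr ⟨by omega, by omega⟩))
      (fun i hi => hμ (l+1) (2*i+2) (mem_Icc.mpr ⟨by omega, by omega⟩))
      (fun i hi => hγ (l+1) (2*i+1) (mem_Icc.mpr ⟨by omega, by omega⟩))
      (fun i hi => hγ (l+1) (2*i+2) (mem_Icc.mpr ⟨by omega, by omega⟩))
      (fun i hi => hVIO (l+1) i hi ζs)
      (fun i hi => hVIE (l+1) i hi ζs)
      (fun i hi => hMlem l i hi)
      (hsadR l)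
    simpa only [Vfun, Afun] using h
  have hVnn : ∀ l : ℕ, 0 ≤ Vfun mp ρ C ζs μs γs (μ l) (γ l) (ζ l) := by
    intro l
    simp only [Vfun]
    positivity
  have hstrong : ∀ N : ℕ, (∑ l ∈ range N, ρ^2 * Afun mp C (ζ (l+2)))
      + Vfun mp ρ C ζs μs γs (μ (N+1)) (γ (N+1)) (ζ (N+1))
      ≤ Vfun mp ρ C ζs μs γs (μ 1) (γ 1) (ζ 1) := by
    intro N
    induction N with
    | zero => simp
    | succ N ih =>
      rw [Finset.sum_range_succ, show N+1+1 = N+2 from rfl]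
      have h := hkey N
      linarith [h, ih]
  have hgnn : ∀ l : ℕ, 0 ≤ ρ^2 * Afun mp C (ζ (l+2)) := by
    intro l
    have hA0 : 0 ≤ Afun mp C (ζ (l+2)) := by
      simp only [Afun]; positivity
    exact mul_nonneg (sq_nonneg ρ) hA0
  have hsummable : Summable (fun l : ℕ => ρ^2 * Afun mp C (ζ (l+2))) :=
    summable_of_sum_range_le hgnn
      (fun N => by have h1 := hstrong N; have h2 := hVnn (N+1); linarith)
  have htend := hsummable.tendsto_atTop_zero
  have hA2 : Tendsto (fun l : ℕ => Afun mp C (ζ (l+2))) atTop (nhds 0) := by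
    have h2 := htend.const_mul ((ρ^2)⁻¹)
    rw [mul_zero] at h2
    refine h2.congr fun l => ?_
    rw [← mul_assoc, inv_mul_cancel₀ (by positivity), one_mul]
  have hA : Tendsto (fun l : ℕ => Afun mp C (ζ l)) atTop (nhds 0) :=
    (tendsto_add_atTop_iff_nat 2).mp hA2
  -- extract the individual residuals
  intro k hk
  obtain ⟨hk1, hk2⟩ := mem_Icc.mp hk
  have hk2' : k ≤ 2*mp+1 := by omega
  have hbound : ∀ l : ℕ, ‖ζ l k - ζ l (k+1)‖^2 ≤ Afun mp C (ζ l) := by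
    intro l
    have nn1 : (0:ℝ) ≤ ∑ i ∈ range (mp+1), ⟪C, ζ l (2*i+1)⟫^2 :=
      Finset.sum_nonneg fun i _ => sq_nonneg _
    have nn2 : (0:ℝ) ≤ ∑ i ∈ range (mp+1), ⟪C, ζ l (2*i+2)⟫^2 :=
      Finset.sum_nonneg fun i _ => sq_nonneg _
    have nn3 : (0:ℝ) ≤ ∑ i ∈ range (mp+1), ‖ζ l (2*i+1) - ζ l (2*i+2)‖^2 :=
      Finset.sum_nonneg fun i _ => by positivity
    have nn4 : (0:ℝ) ≤ ∑ i ∈ range mp, ‖ζ l (2*i+2) - ζ l (2*i+3)‖^2 :=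
      Finset.sum_nonneg fun i _ => by positivity
    rcases Nat.even_or_odd k with he | ho
    · obtain ⟨j, hj⟩ := he
      have hterm : ‖ζ l (2*(j-1)+2) - ζ l (2*(j-1)+3)‖^2
          ≤ ∑ i ∈ range mp, ‖ζ l (2*i+2) - ζ l (2*i+3)‖^2 :=
        Finset.single_le_sum (f := fun i => ‖ζ l (2*i+2) - ζ l (2*i+3)‖^2)
          (fun i _ => by positivity) (mem_range.mpr (show j-1 < mp by omega))
      rw [show 2*(j-1)+2 = k from by omega, show 2*(j-1)+3 = k+1 from by omega] at hterm
      simp only [Afun]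
      linarith
    · obtain ⟨j, hj⟩ := ho
      have hterm : ‖ζ l (2*j+1) - ζ l (2*j+2)‖^2
          ≤ ∑ i ∈ range (mp+1), ‖ζ l (2*i+1) - ζ l (2*i+2)‖^2 :=
        Finset.single_le_sum (f := fun i => ‖ζ l (2*i+1) - ζ l (2*i+2)‖^2)
          (fun i _ => by positivity) (mem_range.mpr (show j < mp+1 by omega))
      rw [show 2*j+1 = k from by omega, show 2*j+2 = k+1 from by omega] at hterm
      simp only [Afun]
      linarith
  have hsq : Tendsto (fun l : ℕ => ‖ζ l k - ζ l (k+1)‖^2) atTop (nhds 0) :=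
    tendsto_of_tendsto_of_tendsto_of_le_of_le tendsto_const_nhds hA
      (fun l => by positivity) hbound
  have hnorm : Tendsto (fun l : ℕ => ‖ζ l k - ζ l (k+1)‖) atTop (nhds 0) := by
    have h := (Real.continuous_sqrt.tendsto 0).comp hsq
    rw [Real.sqrt_zero] at h
    refine h.congr fun l => ?_
    simp only [Function.comp_apply]
    rw [Real.sqrt_sq (norm_nonneg _)]
  exact tendsto_zero_iff_norm_tendsto_zero.mpr hnorm
end
end
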